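/- arXiv:1807.02884 — 4 statements merged into one kernel-verified Lean document; each statement's English description precedes it below -/
import Mathlib

section
/- Let H be any k-uniform hypergraph on [n] with weight matrix W = W(H) and let σ ∈ {±1}^n be balanced. If Π L_Γ Π is positive semidefinite, then σσᵀ is an optimal solution of the SDP with input W. Moreover, if the third-smallest eigenvalue of Π L_Γ Π is strictly positive, then σσᵀ is the unique optimal solution. -/
open Finset Filter Matrix

open scoped Classical

/-- The `k`-element subsets of `[n]`, i.e. the potential hyperedges. -/
abbrev KSet (n k : ℕ) := {e : Finset (Fin n) // e.card = k}

/-- A `±1` label vector (encoded by `Bool`) is balanced if it has equally many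
`+1`'s (`true`) and `-1`'s (`false`). -/
abbrev balanced {n : ℕ} (σ : Fin n → Bool) : Prop :=
  2 * (Finset.univ.filter (fun i => σ i = true)).card = n

/-- `e` is in-cluster w.r.t. `σ`: `σ` is constant on `e`. -/
abbrev inCluster {n : ℕ} (σ : Fin n → Bool) (e : Finset (Fin n)) : Prop :=
  ∀ i ∈ e, ∀ j ∈ e, σ i = σ j

/-- Probability that `e` appears as an edge, given the labels `σ`. -/
noncomputable def edgeP {n : ℕ} (p q : ℝ) (σ : Fin n → Bool) (e : Finset (Fin n)) : ℝ :=
  if inCluster σ e then p else q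

/-- Probability of observing exactly the hypergraph with edge-indicator `E`, given labels `σ`
(edges appear independently). -/
noncomputable def hypProb {n k : ℕ} (p q : ℝ) (σ : Fin n → Bool) (E : KSet n k → Bool) : ℝ :=
  ∏ e : KSet n k, if E e then edgeP p q σ e.1 else 1 - edgeP p q σ e.1

/-- Uniform prior on balanced label vectors. -/
noncomputable def sigProb (n : ℕ) (σ : Fin n → Bool) : ℝ :=
  if balanced σ then 1 / ((Finset.univ.filter (fun τ : Fin n → Bool => balanced τ)).card : ℝ)
  else 0

/-- Probability of an event `P` under the joint law `HSBM(n,p,q;k)` of `(σ, ℋ)`. -/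
noncomputable def prEvent (n k : ℕ) (p q : ℝ)
    (P : (Fin n → Bool) → (KSet n k → Bool) → Prop) : ℝ :=
  ∑ σ : Fin n → Bool, ∑ E : KSet n k → Bool,
    sigProb n σ * hypProb p q σ E * (if P σ E then 1 else 0)

/-- Global sign flip. -/
def negB {n : ℕ} (σ : Fin n → Bool) : Fin n → Bool := fun i => !(σ i)

/-- The edge probability parameter `α · log n / C(n-1, k-1)`. -/
noncomputable def pParam (k : ℕ) (α : ℝ) (n : ℕ) : ℝ :=
  α * Real.log n / ((n - 1).choose (k - 1) : ℝ)

/-- The real `±1` vector associated to a Boolean label vector. -/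
def sgn {n : ℕ} (σ : Fin n → Bool) : Fin n → ℝ := fun i => if σ i then 1 else -1

/-- The rank-one matrix `σσᵀ`. -/
noncomputable def outer {n : ℕ} (σ : Fin n → Bool) : Matrix (Fin n) (Fin n) ℝ :=
  Matrix.of fun i j => sgn σ i * sgn σ j

/-- The weighted adjacency matrix `W(H)`: `W i j` is the number of hyperedges containing
both `i` and `j` (zero on the diagonal). -/
noncomputable def Wmat {n k : ℕ} (E : KSet n k → Bool) : Matrix (Fin n) (Fin n) ℝ :=
  Matrix.of fun i j => if i = j then 0 else
    ((Finset.univ.filter (fun e : KSet n k => E e = true ∧ i ∈ e.1 ∧ j ∈ e.1)).card : ℝ)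

/-- Feasibility for the SDP relaxation: `X ⪰ 0`, unit diagonal, `⟨X, 𝟙𝟙ᵀ⟩ = 0`. -/
def sdpFeasible {n : ℕ} (X : Matrix (Fin n) (Fin n) ℝ) : Prop :=
  X.PosSemidef ∧ (∀ i, X i i = 1) ∧ (∑ i, ∑ j, X i j) = 0

/-- The SDP objective `⟨W, X⟩`. -/
noncomputable def sdpObj {n : ℕ} (W X : Matrix (Fin n) (Fin n) ℝ) : ℝ :=
  ∑ i, ∑ j, W i j * X i j

/-- `Xs` is the unique optimal solution of the SDP with input `W`. -/
def sdpUniqueOpt {n : ℕ} (W Xs : Matrix (Fin n) (Fin n) ℝ) : Prop :=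
  sdpFeasible Xs ∧ ∀ X, sdpFeasible X → X ≠ Xs → sdpObj W X < sdpObj W Xs

/-- `Γ = diag(σ) W diag(σ)`. -/
noncomputable def GammaM {n : ℕ} (σ : Fin n → Bool) (W : Matrix (Fin n) (Fin n) ℝ) :
    Matrix (Fin n) (Fin n) ℝ :=
  Matrix.diagonal (sgn σ) * W * Matrix.diagonal (sgn σ)

/-- The Laplacian `L_Γ = diag(Γ𝟙) - Γ`. -/
noncomputable def LGamma {n : ℕ} (σ : Fin n → Bool) (W : Matrix (Fin n) (Fin n) ℝ) :
    Matrix (Fin n) (Fin n) ℝ :=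
  Matrix.diagonal (fun i => ∑ j, GammaM σ W i j) - GammaM σ W

/-- `Π = I - (1/n)𝟙𝟙ᵀ - (1/n)σσᵀ`, the projector onto `span{𝟙, σ}ᗮ`. -/
noncomputable def PiM {n : ℕ} (σ : Fin n → Bool) : Matrix (Fin n) (Fin n) ℝ :=
  1 - (n : ℝ)⁻¹ • Matrix.of (fun _ _ => (1 : ℝ)) - (n : ℝ)⁻¹ • outer σ

/-- The third-smallest eigenvalue of a symmetric matrix, via the Courant–Fischer
max–min characterization over subspaces of dimension `n - 2`. -/
noncomputable def lambda3 {n : ℕ} (M : Matrix (Fin n) (Fin n) ℝ) : ℝ :=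
  sSup {r : ℝ | ∃ V : Submodule ℝ (Fin n → ℝ), Module.finrank ℝ V = n - 2 ∧
    ∀ x ∈ V, r * (∑ i, x i ^ 2) ≤ x ⬝ᵥ M.mulVec x}

open scoped MatrixOrder in
noncomputable def Matrix.PosSemidef.sqrt {n : ℕ} {Y : Matrix (Fin n) (Fin n) ℝ}
    (_hY : Y.PosSemidef) : Matrix (Fin n) (Fin n) ℝ := CFC.sqrt Y

open scoped MatrixOrder in
lemma Matrix.PosSemidef.posSemidef_sqrt {n : ℕ} {Y : Matrix (Fin n) (Fin n) ℝ}
    (hY : Y.PosSemidef) : hY.sqrt.PosSemidef := (CFC.sqrt_nonneg Y).posSemidef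

open scoped MatrixOrder in
lemma Matrix.PosSemidef.sqrt_mul_self {n : ℕ} {Y : Matrix (Fin n) (Fin n) ℝ}
    (hY : Y.PosSemidef) : hY.sqrt * hY.sqrt = Y := CFC.sqrt_mul_sqrt_self Y hY.nonneg

namespace SDPC

variable {n : ℕ} (σ : Fin n → Bool)

lemma symm_apply {A : Matrix (Fin n) (Fin n) ℝ} (hA : Aᵀ = A) (i j : Fin n) :
    A i j = A j i := by
  nth_rewrite 1 [← hA]; rw [Matrix.transpose_apply]

lemma sgn_sq (i : Fin n) : sgn σ i * sgn σ i = 1 := by unfold sgn; split <;> norm_num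

lemma sum_sgn (hσ : balanced σ) : ∑ i, sgn σ i = 0 := by
  have h : ∀ i : Fin n, sgn σ i = 2 * (if σ i = true then (1:ℝ) else 0) - 1 := by
    intro i; unfold sgn; split <;> norm_num
  rw [Finset.sum_congr rfl fun i _ => h i, Finset.sum_sub_distrib, ← Finset.mul_sum,
    Finset.sum_boole, Finset.sum_const]
  have := congrArg (Nat.cast : ℕ → ℝ) hσ
  simp only [Finset.card_univ, Fintype.card_fin, nsmul_eq_mul, mul_one]
  push_cast at this ⊢
  linarith

lemma exists_true (hσ : balanced σ) (hn0 : 0 < n) : ∃ i, σ i = true := by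
  have h : 0 < (Finset.univ.filter (fun i => σ i = true)).card := by omega
  obtain ⟨i, hi⟩ := Finset.card_pos.mp h
  exact ⟨i, (Finset.mem_filter.mp hi).2⟩

lemma exists_false (hσ : balanced σ) (hn0 : 0 < n) : ∃ i, σ i = false := by
  have h2 := Finset.card_filter_add_card_filter_not (s := (Finset.univ : Finset (Fin n)))
    (p := fun i => σ i = true)
  simp only [Finset.card_univ, Fintype.card_fin] at h2
  have h : 0 < (Finset.univ.filter (fun i => ¬ (σ i = true))).card := by omega
  obtain ⟨i, hi⟩ := Finset.card_pos.mp h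
  exact ⟨i, by simpa using (Finset.mem_filter.mp hi).2⟩

noncomputable def Jn (n : ℕ) : Matrix (Fin n) (Fin n) ℝ := Matrix.of fun _ _ => 1
noncomputable def D : Matrix (Fin n) (Fin n) ℝ := Matrix.diagonal (sgn σ)

lemma D_mul_D : D σ * D σ = 1 := by
  rw [D, Matrix.diagonal_mul_diagonal]
  have : (fun i => sgn σ i * sgn σ i) = fun _ => (1:ℝ) := funext (sgn_sq σ)
  rw [this, Matrix.diagonal_one]

lemma D_transpose : (D σ)ᵀ = D σ := Matrix.diagonal_transpose _

lemma Jn_transpose : (Jn n)ᵀ = Jn n := rfl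

lemma outer_transpose : (outer σ)ᵀ = outer σ := by
  ext i j; simp [outer, Matrix.transpose_apply, mul_comm]

variable {W : Matrix (Fin n) (Fin n) ℝ}

lemma Gamma_transpose (hW : Wᵀ = W) : (GammaM σ W)ᵀ = GammaM σ W := by
  rw [GammaM, Matrix.transpose_mul, Matrix.transpose_mul, Matrix.diagonal_transpose, hW,
    Matrix.mul_assoc]

lemma LGamma_transpose (hW : Wᵀ = W) : (LGamma σ W)ᵀ = LGamma σ W := by
  rw [LGamma, Matrix.transpose_sub, Matrix.diagonal_transpose, Gamma_transpose σ hW]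

lemma LGamma_mul_Jn : LGamma σ W * Jn n = 0 := by
  ext i j
  simp only [LGamma, Matrix.sub_mul, Matrix.sub_apply, Matrix.mul_apply, Jn, Matrix.of_apply,
    Matrix.zero_apply, mul_one, Matrix.diagonal_apply]
  rw [Finset.sum_sub_distrib, Finset.sum_ite_eq Finset.univ i (fun _ => ∑ j, GammaM σ W i j)]
  simp

lemma Jn_mul_LGamma (hW : Wᵀ = W) : Jn n * LGamma σ W = 0 := by
  have h := congrArg Matrix.transpose (LGamma_mul_Jn σ (W := W))
  rwa [Matrix.transpose_mul, Jn_transpose, LGamma_transpose σ hW, Matrix.transpose_zero] at h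

lemma PiM_eq : PiM σ = 1 - (n:ℝ)⁻¹ • Jn n - (n:ℝ)⁻¹ • outer σ := rfl

lemma PiM_transpose : (PiM σ)ᵀ = PiM σ := by
  rw [PiM_eq, Matrix.transpose_sub, Matrix.transpose_sub, Matrix.transpose_smul,
    Matrix.transpose_smul, Matrix.transpose_one, Jn_transpose, outer_transpose]

lemma sdpObj_eq_trace {X : Matrix (Fin n) (Fin n) ℝ} (hX : Xᵀ = X) :
    sdpObj W X = Matrix.trace (W * X) := by
  rw [sdpObj, Matrix.trace]
  simp only [Matrix.diag_apply, Matrix.mul_apply]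
  refine Finset.sum_congr rfl fun i _ => Finset.sum_congr rfl fun j _ => ?_
  rw [symm_apply hX i j]

lemma GammaM_apply (i j : Fin n) : GammaM σ W i j = sgn σ i * W i j * sgn σ j := by
  rw [GammaM, Matrix.mul_diagonal, Matrix.diagonal_mul]

lemma conj_diag {X : Matrix (Fin n) (Fin n) ℝ} (hXd : ∀ i, X i i = 1) (i : Fin n) :
    (D σ * X * D σ) i i = 1 := by
  rw [D, Matrix.mul_diagonal, Matrix.diagonal_mul, hXd i, mul_one, sgn_sq]

lemma gap_eq {X : Matrix (Fin n) (Fin n) ℝ} (hXs : Xᵀ = X) (hXd : ∀ i, X i i = 1) :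
    sdpObj W (outer σ) - sdpObj W X = Matrix.trace (LGamma σ W * (D σ * X * D σ)) := by
  have hY : Matrix.trace (GammaM σ W * (D σ * X * D σ)) = Matrix.trace (W * X) := by
    have : GammaM σ W * (D σ * X * D σ) = D σ * (W * X * D σ) := by
      rw [show GammaM σ W = D σ * W * D σ from rfl]
      simp only [Matrix.mul_assoc]
      rw [← Matrix.mul_assoc (D σ) (D σ) (X * D σ), D_mul_D, Matrix.one_mul]
    rw [this, Matrix.trace_mul_comm, Matrix.mul_assoc, Matrix.mul_assoc, D_mul_D,
      Matrix.mul_one]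
  have hdiagtr : Matrix.trace (Matrix.diagonal (fun i => ∑ j, GammaM σ W i j) *
      (D σ * X * D σ)) = sdpObj W (outer σ) := by
    rw [Matrix.trace]
    simp only [Matrix.diag_apply]
    have h1 : ∀ i : Fin n, (Matrix.diagonal (fun i => ∑ j, GammaM σ W i j) *
        (D σ * X * D σ)) i i = (∑ j, GammaM σ W i j) * ((D σ * X * D σ) i i) := by
      intro i; rw [Matrix.diagonal_mul]
    rw [Finset.sum_congr rfl fun i _ => h1 i]
    have h2 : ∀ i : Fin n, (∑ j, GammaM σ W i j) * ((D σ * X * D σ) i i)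
        = ∑ j, GammaM σ W i j := by
      intro i; rw [conj_diag σ hXd, mul_one]
    rw [Finset.sum_congr rfl fun i _ => h2 i, sdpObj]
    refine Finset.sum_congr rfl fun i _ => Finset.sum_congr rfl fun j _ => ?_
    rw [GammaM_apply]
    simp only [outer, Matrix.of_apply]
    ring
  rw [LGamma, Matrix.sub_mul, Matrix.trace_sub, hY, hdiagtr, sdpObj_eq_trace hXs]

lemma trace_PLP {Y : Matrix (Fin n) (Fin n) ℝ} (hW : Wᵀ = W)
    (hOY : outer σ * Y = 0) (hYO : Y * outer σ = 0) :
    Matrix.trace (PiM σ * LGamma σ W * PiM σ * Y) = Matrix.trace (LGamma σ W * Y) := by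
  set c := (n:ℝ)⁻¹ with hc
  set L := LGamma σ W with hL
  set J := Jn n with hJ
  set O := outer σ with hO
  have hJYO : J * Y * O = 0 := by rw [Matrix.mul_assoc, hYO, Matrix.mul_zero]
  have expand : PiM σ * Y * PiM σ = Y - c•(Y*J) - c•(J*Y) + (c*c)•(J*Y*J) := by
    rw [PiM_eq, ← hJ, ← hO, ← hc]
    simp only [Matrix.sub_mul, Matrix.mul_sub, Matrix.smul_mul, Matrix.mul_smul,
      Matrix.one_mul, Matrix.mul_one, hOY, hYO, hJYO, smul_smul, smul_sub, smul_add,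
      smul_zero, Matrix.mul_zero, Matrix.zero_mul, sub_zero]
    module
  have step1 : Matrix.trace (PiM σ * L * PiM σ * Y) = Matrix.trace (L * (PiM σ * Y * PiM σ)) := by
    rw [show PiM σ * L * PiM σ * Y = PiM σ * (L * (PiM σ * Y)) by
      simp only [Matrix.mul_assoc]]
    rw [Matrix.trace_mul_comm, Matrix.mul_assoc, Matrix.mul_assoc]
  rw [step1, expand]
  have hLJ : L * J = 0 := LGamma_mul_Jn σ
  have hJL : J * L = 0 := Jn_mul_LGamma σ hW
  have t1 : Matrix.trace (L * (c•(Y*J))) = 0 := by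
    rw [Matrix.mul_smul, Matrix.trace_smul, ← Matrix.mul_assoc,
      Matrix.trace_mul_cycle, hJL, Matrix.zero_mul, Matrix.trace_zero, smul_zero]
  have t2 : Matrix.trace (L * (c•(J*Y))) = 0 := by
    rw [Matrix.mul_smul, Matrix.trace_smul, ← Matrix.mul_assoc, hLJ, Matrix.zero_mul,
      Matrix.trace_zero, smul_zero]
  have t3 : Matrix.trace (L * ((c*c)•(J*Y*J))) = 0 := by
    rw [Matrix.mul_smul, Matrix.trace_smul,
      show L * (J*Y*J) = (L*J)*(Y*J) by simp only [Matrix.mul_assoc], hLJ, Matrix.zero_mul,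
      Matrix.trace_zero, smul_zero]
  rw [Matrix.mul_add, Matrix.mul_sub, Matrix.mul_sub, Matrix.trace_add, Matrix.trace_sub,
    Matrix.trace_sub, t1, t2, t3]
  ring

lemma conjT_eq_transpose (A : Matrix (Fin n) (Fin n) ℝ) : Aᴴ = Aᵀ := by
  ext i j; simp [Matrix.conjTranspose_apply]

lemma outer_posSemidef : (outer σ).PosSemidef := by
  refine Matrix.PosSemidef.of_dotProduct_mulVec_nonneg ?_ ?_
  · rw [Matrix.IsHermitian, conjT_eq_transpose, outer_transpose]
  · intro x
    have : star x ⬝ᵥ (outer σ) *ᵥ x = (∑ i, x i * sgn σ i)^2 := by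
      simp only [star_trivial, dotProduct, Matrix.mulVec, outer, Matrix.of_apply,
        dotProduct]
      rw [sq, Finset.sum_mul_sum]
      refine Finset.sum_congr rfl fun i _ => ?_
      rw [Finset.mul_sum]
      refine Finset.sum_congr rfl fun j _ => ?_
      ring
    rw [this]
    positivity

lemma outer_feasible (hσ : balanced σ) : sdpFeasible (outer σ) := by
  refine ⟨outer_posSemidef σ, fun i => sgn_sq σ i, ?_⟩
  have h : ∀ i : Fin n, ∑ j, outer σ i j = sgn σ i * ∑ j, sgn σ j := by
    intro i; rw [Finset.mul_sum]; rfl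
  rw [Finset.sum_congr rfl fun i _ => h i, sum_sgn σ hσ]
  simp

variable {X : Matrix (Fin n) (Fin n) ℝ}

lemma X_transpose (hX : sdpFeasible X) : Xᵀ = X := by
  have := hX.1.1; rwa [Matrix.IsHermitian, conjT_eq_transpose] at this

lemma X_mulVec_one (hX : sdpFeasible X) : X *ᵥ (fun _ => (1:ℝ)) = 0 := by
  rw [← hX.1.dotProduct_mulVec_zero_iff]
  simp only [star_trivial, dotProduct, Matrix.mulVec, one_mul, dotProduct]
  simpa using hX.2.2

lemma Y_mulVec_sgn (hX : sdpFeasible X) : (D σ * X * D σ) *ᵥ sgn σ = 0 := by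
  have h1 : D σ *ᵥ sgn σ = (fun _ => (1:ℝ)) := by
    funext i
    rw [D, Matrix.mulVec_diagonal, sgn_sq]
  rw [← Matrix.mulVec_mulVec, h1, ← Matrix.mulVec_mulVec, X_mulVec_one hX,
    Matrix.mulVec_zero]

lemma Y_transpose (hX : sdpFeasible X) : (D σ * X * D σ)ᵀ = D σ * X * D σ := by
  rw [Matrix.transpose_mul, Matrix.transpose_mul, D_transpose, X_transpose hX,
    Matrix.mul_assoc]

lemma outer_mul_gen {Y : Matrix (Fin n) (Fin n) ℝ} (hy : Y *ᵥ sgn σ = 0) (hys : Yᵀ = Y) :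
    outer σ * Y = 0 := by
  ext i j
  simp only [Matrix.mul_apply, outer, Matrix.of_apply, Matrix.zero_apply]
  have h : ∀ k, sgn σ i * sgn σ k * Y k j = sgn σ i * (Y j k * sgn σ k) := by
    intro k
    rw [symm_apply hys k j]; ring
  rw [Finset.sum_congr rfl fun k _ => h k, ← Finset.mul_sum]
  have h2 : ∑ k, Y j k * sgn σ k = (Y *ᵥ sgn σ) j := rfl
  rw [h2, hy]
  simp

lemma outer_mul_Y (hX : sdpFeasible X) : outer σ * (D σ * X * D σ) = 0 :=
  outer_mul_gen σ (Y_mulVec_sgn σ hX) (Y_transpose σ hX)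

lemma Y_mul_outer (hX : sdpFeasible X) : (D σ * X * D σ) * outer σ = 0 := by
  have h := congrArg Matrix.transpose (outer_mul_Y σ hX)
  rwa [Matrix.transpose_mul, outer_transpose, Y_transpose σ hX, Matrix.transpose_zero] at h

lemma Y_posSemidef (hX : sdpFeasible X) : (D σ * X * D σ).PosSemidef := by
  have := hX.1.mul_mul_conjTranspose_same (D σ)
  rwa [conjT_eq_transpose, D_transpose] at this

lemma trace_mul_sq (M S : Matrix (Fin n) (Fin n) ℝ) (hS : Sᵀ = S) :
    Matrix.trace (M * (S * S)) = ∑ i, (fun j => S i j) ⬝ᵥ M *ᵥ (fun j => S i j) := by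
  rw [show M * (S * S) = (M * S) * S by rw [Matrix.mul_assoc],
    Matrix.trace_mul_comm, Matrix.trace]
  refine Finset.sum_congr rfl fun i _ => ?_
  simp only [Matrix.diag_apply, Matrix.mul_apply, dotProduct, Matrix.mulVec,
    dotProduct]
  refine Finset.sum_congr rfl fun j _ => ?_
  simp only [Finset.mul_sum]
  refine Finset.sum_congr rfl fun k _ => ?_
  rw [symm_apply hS k i]

lemma Wmat_transpose {k : ℕ} (E : KSet n k → Bool) : (Wmat E)ᵀ = Wmat E := by
  ext i j
  simp only [Matrix.transpose_apply, Wmat, Matrix.of_apply]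
  by_cases h : i = j
  · subst h; simp
  · rw [if_neg (fun hh => h hh.symm), if_neg h]
    norm_cast
    apply congrArg Finset.card
    apply Finset.filter_congr
    intro e _
    constructor
    · rintro ⟨h1, h2, h3⟩; exact ⟨h1, h3, h2⟩
    · rintro ⟨h1, h2, h3⟩; exact ⟨h1, h3, h2⟩

lemma sum_sgn_sq : ∑ j, sgn σ j * sgn σ j = (n : ℝ) := by
  rw [Finset.sum_congr rfl fun j _ => sgn_sq σ j]
  simp

lemma sqrt_transpose {Y : Matrix (Fin n) (Fin n) ℝ} (hY : Y.PosSemidef) :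
    hY.sqrtᵀ = hY.sqrt := by
  have := hY.posSemidef_sqrt.1
  rwa [Matrix.IsHermitian, conjT_eq_transpose] at this

lemma trace_mul_psd_sum (M : Matrix (Fin n) (Fin n) ℝ) {Y : Matrix (Fin n) (Fin n) ℝ}
    (hY : Y.PosSemidef) :
    Matrix.trace (M * Y) = ∑ i, (fun j => hY.sqrt i j) ⬝ᵥ M *ᵥ (fun j => hY.sqrt i j) := by
  conv_lhs => rw [← hY.sqrt_mul_self]
  exact trace_mul_sq M hY.sqrt (sqrt_transpose hY)

/-- the gap as a sum of quadratic forms of `M = Π L Π` at the rows of `√Y`. -/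
lemma gap_eq_sum (hW : Wᵀ = W) (hX : sdpFeasible X) :
    sdpObj W (outer σ) - sdpObj W X =
      ∑ i, (fun j => (Y_posSemidef σ hX).sqrt i j) ⬝ᵥ
        (PiM σ * LGamma σ W * PiM σ) *ᵥ (fun j => (Y_posSemidef σ hX).sqrt i j) := by
  rw [gap_eq σ (X_transpose hX) hX.2.1, ← trace_PLP σ hW (outer_mul_Y σ hX) (Y_mul_outer σ hX)]
  exact trace_mul_psd_sum _ (Y_posSemidef σ hX)

/-- optimality under PSD assumption -/
lemma part1 (hW : Wᵀ = W) (hM : (PiM σ * LGamma σ W * PiM σ).PosSemidef)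
    (hX : sdpFeasible X) : sdpObj W X ≤ sdpObj W (outer σ) := by
  have h := gap_eq_sum σ hW hX
  have hnn : 0 ≤ sdpObj W (outer σ) - sdpObj W X := by
    rw [h]
    refine Finset.sum_nonneg fun i _ => ?_
    have := hM.dotProduct_mulVec_nonneg (fun j => (Y_posSemidef σ hX).sqrt i j)
    simpa using this
  linarith

noncomputable def Kspan {n : ℕ} (σ : Fin n → Bool) : Submodule ℝ (Fin n → ℝ) :=
  Submodule.span ℝ {(fun _ => (1:ℝ)), sgn σ}

lemma finrank_Kspan (hσ : balanced σ) (hn0 : 0 < n) :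
    Module.finrank ℝ (Kspan σ) = 2 := by
  have hindep : LinearIndependent ℝ ![(fun _ => (1:ℝ)), sgn σ] := by
    rw [LinearIndependent.pair_iff]
    intro a b hab
    obtain ⟨i, hi⟩ := exists_true σ hσ hn0
    obtain ⟨j, hj⟩ := exists_false σ hσ hn0
    have h1 := congrFun hab i
    have h2 := congrFun hab j
    simp only [Pi.add_apply, Pi.smul_apply, smul_eq_mul, Pi.zero_apply, sgn, hi, hj,
      if_true, if_false, mul_one, Bool.false_eq_true] at h1 h2
    constructor <;> linarith
  have hrange : Set.range ![(fun _ => (1:ℝ)), sgn σ] = {(fun _ => (1:ℝ)), sgn σ} := by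
    ext x
    constructor
    · rintro ⟨i, rfl⟩
      fin_cases i <;> simp
    · rintro (rfl | rfl)
      · exact ⟨0, rfl⟩
      · exact ⟨1, rfl⟩
  have : Kspan σ = Submodule.span ℝ (Set.range ![(fun _ => (1:ℝ)), sgn σ]) := by
    rw [Kspan, hrange]
  rw [this, finrank_span_eq_card hindep, Fintype.card_fin]

lemma PiM_mulVec_one (hσ : balanced σ) (hn0 : 0 < n) :
    PiM σ *ᵥ (fun _ => (1:ℝ)) = 0 := by
  have hJ : Jn n *ᵥ (fun _ => (1:ℝ)) = fun _ => (n:ℝ) := by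
    funext i; simp [Jn, Matrix.mulVec, dotProduct]
  have hO : outer σ *ᵥ (fun _ => (1:ℝ)) = 0 := by
    funext i
    simp only [outer, Matrix.mulVec, dotProduct, Matrix.of_apply, mul_one,
      Pi.zero_apply]
    rw [← Finset.mul_sum, sum_sgn σ hσ, mul_zero]
  rw [PiM_eq, Matrix.sub_mulVec, Matrix.sub_mulVec, Matrix.smul_mulVec,
    Matrix.smul_mulVec, hJ, hO, Matrix.one_mulVec, smul_zero, sub_zero]
  funext i
  have : (n:ℝ) ≠ 0 := Nat.cast_ne_zero.mpr hn0.ne'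
  simp only [Pi.sub_apply, Pi.smul_apply, smul_eq_mul, Pi.zero_apply]
  field_simp
  ring

lemma PiM_mulVec_sgn (hσ : balanced σ) (hn0 : 0 < n) : PiM σ *ᵥ sgn σ = 0 := by
  have hJ : Jn n *ᵥ sgn σ = 0 := by
    funext i; simp [Jn, Matrix.mulVec, dotProduct, sum_sgn σ hσ]
  have hO : outer σ *ᵥ sgn σ = fun i => (n:ℝ) * sgn σ i := by
    funext i
    simp only [outer, Matrix.mulVec, dotProduct, Matrix.of_apply]
    rw [Finset.sum_congr rfl fun j _ => mul_assoc (sgn σ i) (sgn σ j) (sgn σ j),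
      ← Finset.mul_sum, sum_sgn_sq σ]
    ring
  rw [PiM_eq, Matrix.sub_mulVec, Matrix.sub_mulVec, Matrix.smul_mulVec,
    Matrix.smul_mulVec, hJ, hO, Matrix.one_mulVec, smul_zero, sub_zero]
  funext i
  have : (n:ℝ) ≠ 0 := Nat.cast_ne_zero.mpr hn0.ne'
  simp only [Pi.sub_apply, Pi.smul_apply, smul_eq_mul, Pi.zero_apply]
  field_simp
  ring

lemma PiM_mulVec_K (hσ : balanced σ) (hn0 : 0 < n) {x : Fin n → ℝ} (hx : x ∈ Kspan σ) :
    PiM σ *ᵥ x = 0 := by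
  obtain ⟨a, b, hab⟩ := Submodule.mem_span_pair.mp hx
  rw [← hab, Matrix.mulVec_add, Matrix.mulVec_smul, Matrix.mulVec_smul,
    PiM_mulVec_one σ hσ hn0, PiM_mulVec_sgn σ hσ hn0, smul_zero, smul_zero, add_zero]

lemma M_mulVec_K (hσ : balanced σ) (hn0 : 0 < n) {x : Fin n → ℝ} (hx : x ∈ Kspan σ) :
    (PiM σ * LGamma σ W * PiM σ) *ᵥ x = 0 := by
  rw [← Matrix.mulVec_mulVec, PiM_mulVec_K σ hσ hn0 hx, Matrix.mulVec_zero]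

lemma M_transpose (hW : Wᵀ = W) :
    (PiM σ * LGamma σ W * PiM σ)ᵀ = PiM σ * LGamma σ W * PiM σ := by
  rw [Matrix.transpose_mul, Matrix.transpose_mul, PiM_transpose, LGamma_transpose σ hW,
    Matrix.mul_assoc]

/-- `λ₃ > 0` gives PSD-ness of `M = Π L Π` plus the fact that the quadratic form
vanishes only on `span {𝟙, σ}`. -/
lemma lambda3_pos_key (hσ : balanced σ) (hn0 : 0 < n) (hn2 : 2 ≤ n) (hW : Wᵀ = W)
    (h3 : 0 < lambda3 (PiM σ * LGamma σ W * PiM σ)) :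
    (PiM σ * LGamma σ W * PiM σ).PosSemidef ∧
      ∀ x : Fin n → ℝ, x ⬝ᵥ (PiM σ * LGamma σ W * PiM σ) *ᵥ x = 0 → x ∈ Kspan σ := by
  set M := PiM σ * LGamma σ W * PiM σ with hM
  -- extract a positive element of the set
  have hex : ∃ r ∈ {r : ℝ | ∃ V : Submodule ℝ (Fin n → ℝ), Module.finrank ℝ V = n - 2 ∧
      ∀ x ∈ V, r * (∑ i, x i ^ 2) ≤ x ⬝ᵥ M.mulVec x}, 0 < r := by
    by_contra hcon
    push_neg at hcon
    have : lambda3 M ≤ 0 := Real.sSup_le hcon le_rfl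
    rw [lambda3] at h3
    rw [lambda3] at this
    linarith
  obtain ⟨r, ⟨V, hVrank, hVq⟩, hr⟩ := hex
  -- quadratic form vanishes on K
  have hqK : ∀ x ∈ Kspan σ, x ⬝ᵥ M *ᵥ x = 0 := by
    intro x hx
    rw [M_mulVec_K σ hσ hn0 hx, dotProduct_zero]
  -- V ⊓ K = ⊥
  have hbot : V ⊓ Kspan σ = ⊥ := by
    rw [Submodule.eq_bot_iff]
    intro x ⟨hxV, hxK⟩
    have h1 := hVq x hxV
    rw [hqK x hxK] at h1
    have h2 : ∑ i, x i ^ 2 ≤ 0 := by nlinarith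
    have h3 : ∀ i ∈ Finset.univ, (0:ℝ) ≤ x i ^ 2 := fun i _ => sq_nonneg _
    have h4 : ∑ i, x i ^ 2 = 0 := le_antisymm h2 (Finset.sum_nonneg h3)
    funext i
    have := (Finset.sum_eq_zero_iff_of_nonneg h3).mp h4 i (Finset.mem_univ i)
    exact pow_eq_zero_iff (two_ne_zero) |>.mp this
  -- V ⊔ K = ⊤
  have htop : V ⊔ Kspan σ = ⊤ := by
    apply Submodule.eq_top_of_finrank_eq
    have hsum := Submodule.finrank_sup_add_finrank_inf_eq V (Kspan σ)
    rw [hbot, finrank_bot, add_zero, hVrank, finrank_Kspan σ hσ hn0] at hsum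
    rw [hsum, Module.finrank_fin_fun]
    omega
  -- decomposition bound
  have hdecomp : ∀ x : Fin n → ℝ, ∃ v ∈ V, ∃ z ∈ Kspan σ,
      x = v + z ∧ x ⬝ᵥ M *ᵥ x = v ⬝ᵥ M *ᵥ v := by
    intro x
    have hx : x ∈ V ⊔ Kspan σ := htop ▸ Submodule.mem_top
    obtain ⟨v, hv, z, hz, hvz⟩ := Submodule.mem_sup.mp hx
    refine ⟨v, hv, z, hz, hvz.symm, ?_⟩
    have hMz : M *ᵥ z = 0 := M_mulVec_K σ hσ hn0 hz
    have hzM : z ᵥ* M = 0 := by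
      rw [hM, ← M_transpose σ hW, Matrix.vecMul_transpose, ← hM, hMz]
    have h1 : z ⬝ᵥ M *ᵥ v = 0 := by
      rw [Matrix.dotProduct_mulVec, hzM, zero_dotProduct]
    rw [← hvz, Matrix.mulVec_add, hMz, add_dotProduct, dotProduct_add,
      dotProduct_add, dotProduct_zero, dotProduct_zero, h1]
    ring
  constructor
  · refine Matrix.PosSemidef.of_dotProduct_mulVec_nonneg ?_ ?_
    · rw [Matrix.IsHermitian, conjT_eq_transpose]
      exact M_transpose σ hW
    · intro x
      obtain ⟨v, hv, z, hz, hxe, hq⟩ := hdecomp x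
      rw [star_trivial, hq]
      have := hVq v hv
      have hs : (0:ℝ) ≤ ∑ i, v i ^ 2 := Finset.sum_nonneg fun i _ => sq_nonneg _
      nlinarith
  · intro x hx0
    obtain ⟨v, hv, z, hz, hxe, hq⟩ := hdecomp x
    rw [hx0] at hq
    have h1 := hVq v hv
    rw [← hq] at h1
    have h2 : ∑ i, v i ^ 2 ≤ 0 := by nlinarith
    have h3 : ∀ i ∈ Finset.univ, (0:ℝ) ≤ v i ^ 2 := fun i _ => sq_nonneg _
    have h4 : ∑ i, v i ^ 2 = 0 := le_antisymm h2 (Finset.sum_nonneg h3)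
    have hv0 : v = 0 := by
      funext i
      have := (Finset.sum_eq_zero_iff_of_nonneg h3).mp h4 i (Finset.mem_univ i)
      exact pow_eq_zero_iff (two_ne_zero) |>.mp this
    rw [hxe, hv0, zero_add]
    exact hz

lemma vecMul_symm {A : Matrix (Fin n) (Fin n) ℝ} (hA : Aᵀ = A) (x : Fin n → ℝ) :
    x ᵥ* A = A *ᵥ x := by
  nth_rewrite 1 [← hA]
  rw [Matrix.vecMul_transpose]

lemma unique_core (hσ : balanced σ) (hn0 : 0 < n) (hW : Wᵀ = W)
    (hMpsd : (PiM σ * LGamma σ W * PiM σ).PosSemidef)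
    (hker : ∀ x : Fin n → ℝ, x ⬝ᵥ (PiM σ * LGamma σ W * PiM σ) *ᵥ x = 0 → x ∈ Kspan σ)
    (hX : sdpFeasible X) (hne : X ≠ outer σ) :
    sdpObj W X < sdpObj W (outer σ) := by
  have hgap := gap_eq_sum σ hW hX
  have hterm : ∀ i ∈ Finset.univ, 0 ≤ (fun j => (Y_posSemidef σ hX).sqrt i j) ⬝ᵥ
      (PiM σ * LGamma σ W * PiM σ) *ᵥ (fun j => (Y_posSemidef σ hX).sqrt i j) := by
    intro i _
    simpa using hMpsd.dotProduct_mulVec_nonneg (fun j => (Y_posSemidef σ hX).sqrt i j)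
  have hge : 0 ≤ sdpObj W (outer σ) - sdpObj W X := by
    rw [hgap]; exact Finset.sum_nonneg hterm
  rcases eq_or_lt_of_le hge with heq | hlt
  · exfalso
    apply hne
    set S := (Y_posSemidef σ hX).sqrt with hSdef
    have hsum0 : ∑ i, (fun j => S i j) ⬝ᵥ (PiM σ * LGamma σ W * PiM σ) *ᵥ
        (fun j => S i j) = 0 := by rw [← hgap, ← heq]
    have hrow0 : ∀ i, (fun j => S i j) ⬝ᵥ (PiM σ * LGamma σ W * PiM σ) *ᵥ
        (fun j => S i j) = 0 := fun i =>
      (Finset.sum_eq_zero_iff_of_nonneg hterm).mp hsum0 i (Finset.mem_univ i)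
    have hrowK : ∀ i, (fun j => S i j) ∈ Kspan σ := fun i => hker _ (hrow0 i)
    have hSt : Sᵀ = S := sqrt_transpose _
    have hSS : S * S = D σ * X * D σ := (Y_posSemidef σ hX).sqrt_mul_self
    have hYs : (D σ * X * D σ) *ᵥ sgn σ = 0 := Y_mulVec_sgn σ hX
    have hSs : S *ᵥ sgn σ = 0 := by
      have h1 : (S *ᵥ sgn σ) ⬝ᵥ (S *ᵥ sgn σ) = 0 := by
        rw [Matrix.dotProduct_mulVec, vecMul_symm hSt, Matrix.mulVec_mulVec, hSS, hYs,
          zero_dotProduct]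
      exact dotProduct_self_eq_zero.mp h1
    have hnR : (n:ℝ) ≠ 0 := Nat.cast_ne_zero.mpr hn0.ne'
    -- each row of S is constant
    have hall : ∀ i j, S i j = S i i := by
      have hconst : ∀ i, ∃ a : ℝ, ∀ j, S i j = a := by
        intro i
        obtain ⟨a, b, hab⟩ := Submodule.mem_span_pair.mp (hrowK i)
        have hent : ∀ j, S i j = a + b * sgn σ j := by
          intro j
          have := congrFun hab j
          simp only [Pi.add_apply, Pi.smul_apply, smul_eq_mul, mul_one] at this
          exact this.symm
        have h0 : (0:ℝ) = ∑ j, S i j * sgn σ j := by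
          have := congrFun hSs i
          simp only [Pi.zero_apply] at this
          exact this.symm
        have hval : ∑ j, S i j * sgn σ j = b * n := by
          rw [Finset.sum_congr rfl fun j _ => by rw [hent j]]
          simp only [add_mul]
          rw [Finset.sum_add_distrib, ← Finset.mul_sum, sum_sgn σ hσ, mul_zero, zero_add,
            Finset.sum_congr rfl fun j _ => mul_assoc b (sgn σ j) (sgn σ j),
            ← Finset.mul_sum, sum_sgn_sq σ]
        have hb : b = 0 := by
          rw [hval] at h0
          rcases mul_eq_zero.mp h0.symm with h | h
          · exact h
          · exact absurd h hnR
        exact ⟨a, fun j => by rw [hent j, hb, zero_mul, add_zero]⟩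
      intro i j
      obtain ⟨a, ha⟩ := hconst i
      rw [ha j, ha i]
    have hdiag_eq : ∀ i j, S i i = S j j := by
      intro i j
      rw [← hall i j, symm_apply hSt i j, hall j i]
    have hTij : ∀ i j, (D σ * X * D σ) i j = (n:ℝ) * (S i i * S j j) := by
      intro i j
      have hterm2 : ∀ k, S i k * S k j = S i i * S j j := by
        intro k
        rw [hall i k, symm_apply hSt k j, hall j k]
      rw [← hSS, Matrix.mul_apply, Finset.sum_congr rfl fun k _ => hterm2 k,
        Finset.sum_const, Finset.card_univ, Fintype.card_fin, nsmul_eq_mul]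
    have hYall : ∀ i j, (D σ * X * D σ) i j = 1 := by
      intro i j
      have h1 : (D σ * X * D σ) j j = 1 := conj_diag σ hX.2.1 j
      rw [hTij j j] at h1
      rw [hTij i j, hdiag_eq i j, h1]
    ext i j
    have h1 : sgn σ i * X i j * sgn σ j = 1 := by
      have := hYall i j
      rwa [D, Matrix.mul_diagonal, Matrix.diagonal_mul] at this
    have h2 : outer σ i j = sgn σ i * sgn σ j := rfl
    calc X i j = (sgn σ i * sgn σ i) * X i j * (sgn σ j * sgn σ j) := by
          rw [sgn_sq, sgn_sq]; ring
      _ = sgn σ i * (sgn σ i * X i j * sgn σ j) * sgn σ j := by ring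
      _ = sgn σ i * 1 * sgn σ j := by rw [h1]
      _ = outer σ i j := by rw [h2]; ring
  · linarith

end SDPC

/-- If `Π L_Γ Π ⪰ 0` then `σσᵀ` is an optimal solution of the SDP with
input `W(H)`; if moreover `λ₃(Π L_Γ Π) > 0` then it is the unique optimal solution. -/
theorem sdp_dual_certificate (n k : ℕ) (hn : Even n) (hn0 : 0 < n) (hk : 2 ≤ k)
    (E : KSet n k → Bool) (σ : Fin n → Bool) (hσ : balanced σ) :
    ((PiM σ * LGamma σ (Wmat E) * PiM σ).PosSemidef →
      sdpFeasible (outer σ) ∧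
        ∀ X : Matrix (Fin n) (Fin n) ℝ, sdpFeasible X →
          sdpObj (Wmat E) X ≤ sdpObj (Wmat E) (outer σ)) ∧
    (0 < lambda3 (PiM σ * LGamma σ (Wmat E) * PiM σ) →
      sdpUniqueOpt (Wmat E) (outer σ)) := by
  have hW : (Wmat E)ᵀ = Wmat E := SDPC.Wmat_transpose E
  have hn2 : 2 ≤ n := by
    obtain ⟨m, rfl⟩ := hn
    omega
  constructor
  · intro hM
    exact ⟨SDPC.outer_feasible σ hσ, fun X hX => SDPC.part1 σ hW hM hX⟩
  · intro h3
    obtain ⟨hMpsd, hker⟩ := SDPC.lambda3_pos_key σ hσ hn0 hn2 hW h3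
    exact ⟨SDPC.outer_feasible σ hσ,
      fun X hX hne => SDPC.unique_core σ hσ hn0 hW hMpsd hker hX hne⟩
end

section
/- Fix a balanced σ ∈ {±1}^n and let ℋ be sampled from HSBM(n,p,q;k) conditionally on σ, with W = W(ℋ). Then Π (E L_Γ) Π = ((p−q)/2) · n · C(n/2 − 2, k−2) · Π, where E denotes expectation over ℋ given σ. Consequently, the third-smallest eigenvalue of Π (E L_Γ) Π equals ((k−1)/2^{k−1})(α−β) log n + o(log n). -/
open Finset Filter Matrix

open scoped Classical

/-- The expectation `E L_Γ` of the Laplacian `L_Γ` over `ℋ` sampled conditionally on `σ`. -/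
noncomputable def expLGamma (n k : ℕ) (p q : ℝ) (σ : Fin n → Bool) :
    Matrix (Fin n) (Fin n) ℝ :=
  ∑ E : KSet n k → Bool, hypProb p q σ E • LGamma σ (Wmat E)

section Prob

lemma sum_pi_bool_prod {ι : Type*} [Fintype ι] [DecidableEq ι] (f : ι → Bool → ℝ) :
    ∑ E : ι → Bool, ∏ e : ι, f e (E e) = ∏ e : ι, (f e true + f e false) := by
  classical
  have h := Finset.prod_univ_sum (fun _ : ι => (Finset.univ : Finset Bool)) f
  rw [← Fintype.piFinset_univ]
  rw [← h]
  congr 1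
  ext e
  simp [Fintype.sum_bool]

variable {n k : ℕ} (p q : ℝ) (σ : Fin n → Bool)

lemma sum_hypProb_mul (φ : KSet n k → Bool → ℝ) (e₀ : KSet n k) :
    ∑ E : KSet n k → Bool, hypProb p q σ E * φ e₀ (E e₀)
      = edgeP p q σ e₀.1 * φ e₀ true + (1 - edgeP p q σ e₀.1) * φ e₀ false := by
  classical
  have key : ∀ E : KSet n k → Bool, hypProb p q σ E * φ e₀ (E e₀)
      = ∏ e : KSet n k, ((if E e then edgeP p q σ e.1 else 1 - edgeP p q σ e.1) *
          (if e = e₀ then φ e₀ (E e) else 1)) := by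
    intro E
    rw [Finset.prod_mul_distrib]
    congr 1
    rw [Finset.prod_ite_eq' Finset.univ e₀ (fun e => φ e₀ (E e))]
    simp
  simp_rw [key]
  rw [sum_pi_bool_prod (fun e b => (if b then edgeP p q σ e.1 else 1 - edgeP p q σ e.1) *
          (if e = e₀ then φ e₀ b else 1))]
  have : ∀ e : KSet n k,
      ((if true then edgeP p q σ e.1 else 1 - edgeP p q σ e.1) * (if e = e₀ then φ e₀ true else 1)
      + (if false then edgeP p q σ e.1 else 1 - edgeP p q σ e.1) * (if e = e₀ then φ e₀ false else 1))
      = if e = e₀ then edgeP p q σ e₀.1 * φ e₀ true + (1 - edgeP p q σ e₀.1) * φ e₀ false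
        else 1 := by
    intro e
    by_cases he : e = e₀ <;> simp [he] <;> ring
  rw [Finset.prod_congr rfl (fun e _ => this e), Finset.prod_ite_eq' Finset.univ e₀]
  simp

lemma sum_hypProb_ind (e₀ : KSet n k) :
    ∑ E : KSet n k → Bool, hypProb p q σ E * (if E e₀ = true then (1:ℝ) else 0)
      = edgeP p q σ e₀.1 := by
  have := sum_hypProb_mul p q σ (fun _ b => if b = true then (1:ℝ) else 0) e₀
  simpa using this

end Prob
section Count
variable {n k : ℕ}

noncomputable def expW (n k : ℕ) (p q : ℝ) (σ : Fin n → Bool) : Matrix (Fin n) (Fin n) ℝ :=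
  ∑ E : KSet n k → Bool, hypProb p q σ E • Wmat E

lemma expW_diag (p q : ℝ) (σ : Fin n → Bool) (i : Fin n) : expW n k p q σ i i = 0 := by
  simp [expW, Wmat, Matrix.sum_apply]

lemma expW_apply (p q : ℝ) (σ : Fin n → Bool) (i j : Fin n) (hij : i ≠ j) :
    expW n k p q σ i j
      = ∑ e : KSet n k, (if i ∈ e.1 ∧ j ∈ e.1 then edgeP p q σ e.1 else 0) := by
  classical
  have hW : ∀ E : KSet n k → Bool, Wmat E i j
      = ∑ e : KSet n k, (if i ∈ e.1 ∧ j ∈ e.1 then (if E e = true then (1:ℝ) else 0) else 0) := by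
    intro E
    simp only [Wmat, Matrix.of_apply, if_neg hij]
    rw [Finset.card_filter]
    push_cast
    congr 1
    ext e
    by_cases h1 : E e = true <;> by_cases h2 : i ∈ e.1 ∧ j ∈ e.1 <;>
      simp [h1, h2, and_comm]
  simp only [expW, Matrix.sum_apply, Matrix.smul_apply, smul_eq_mul]
  calc ∑ E : KSet n k → Bool, hypProb p q σ E * Wmat E i j
      = ∑ e : KSet n k, ∑ E : KSet n k → Bool, hypProb p q σ E *
          (if i ∈ e.1 ∧ j ∈ e.1 then (if E e = true then (1:ℝ) else 0) else 0) := by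
        rw [Finset.sum_comm]
        refine Finset.sum_congr rfl fun E _ => ?_
        rw [hW E, Finset.mul_sum]
    _ = ∑ e : KSet n k, (if i ∈ e.1 ∧ j ∈ e.1 then edgeP p q σ e.1 else 0) := by
        refine Finset.sum_congr rfl fun e _ => ?_
        by_cases h2 : i ∈ e.1 ∧ j ∈ e.1
        · simp only [if_pos h2]
          exact sum_hypProb_ind p q σ e
        · simp [h2]

lemma count_subsets (hk : 2 ≤ k) (S : Finset (Fin n)) (i j : Fin n) (hij : i ≠ j)
    (hi : i ∈ S) (hj : j ∈ S) :
    (Finset.univ.filter (fun e : KSet n k => i ∈ e.1 ∧ j ∈ e.1 ∧ e.1 ⊆ S)).card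
      = (S.card - 2).choose (k - 2) := by
  classical
  have hcardij : ({i, j} : Finset (Fin n)).card = 2 := by
    rw [Finset.card_insert_of_notMem (by simp [hij]), Finset.card_singleton]
  have hsubij : ({i, j} : Finset (Fin n)) ⊆ S := by
    intro a ha; simp at ha; rcases ha with rfl | rfl <;> assumption
  have hS : S.card - 2 = (S \ {i, j}).card := by
    rw [Finset.card_sdiff_of_subset hsubij, hcardij]
  rw [hS, ← Finset.card_powersetCard (k-2) (S \ {i, j})]
  refine Finset.card_bij' (fun e _ => e.1 \ {i, j})
    (fun t ht => ⟨t ∪ {i, j}, ?_⟩) ?_ ?_ ?_ ?_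
  · -- card of t ∪ {i,j} = k
    rw [Finset.mem_powersetCard] at ht
    have hdisj : Disjoint t ({i, j} : Finset (Fin n)) := by
      have := ht.1
      rw [Finset.disjoint_right]
      intro a ha hat
      exact (Finset.mem_sdiff.mp (this hat)).2 ha
    rw [Finset.card_union_of_disjoint hdisj, ht.2, hcardij]
    omega
  · -- forward maps into powersetCard
    intro e he
    rw [Finset.mem_filter] at he
    obtain ⟨-, hie, hje, heS⟩ := he
    rw [Finset.mem_powersetCard]
    constructor
    · exact Finset.sdiff_subset_sdiff heS (le_refl _)
    · rw [Finset.card_sdiff_of_subset (by intro a ha; simp at ha; rcases ha with rfl | rfl <;> assumption)]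
      rw [e.2, hcardij]
  · -- backward maps into filter
    intro t ht
    rw [Finset.mem_powersetCard] at ht
    simp only [Finset.mem_filter, Finset.mem_univ, true_and]
    refine ⟨?_, ?_, ?_⟩
    · simp [Finset.mem_union]
    · simp [Finset.mem_union]
    · intro a ha
      rcases Finset.mem_union.mp ha with h | h
      · exact (Finset.mem_sdiff.mp (ht.1 h)).1
      · simp at h; rcases h with rfl | rfl <;> assumption
  · -- left inverse
    intro e he
    rw [Finset.mem_filter] at he
    apply Subtype.ext
    simp only
    rw [Finset.sdiff_union_of_subset]
    intro a ha
    simp at ha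
    rcases ha with rfl | rfl
    · exact he.2.1
    · exact he.2.2.1
  · -- right inverse
    intro t ht
    rw [Finset.mem_powersetCard] at ht
    show (t ∪ {i, j}) \ {i, j} = t
    rw [Finset.union_sdiff_cancel_right]
    rw [Finset.disjoint_left]
    intro a hat ha
    exact (Finset.mem_sdiff.mp (ht.1 hat)).2 ha

end Count
section Balanced

lemma balanced_class_card {n m : ℕ} (σ : Fin n → Bool) (hσ : balanced σ) (hn : n = 2 * m)
    (b : Bool) : (Finset.univ.filter (fun l => σ l = b)).card = m := by
  classical
  have htot := Finset.card_filter_add_card_filter_not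
    (s := (Finset.univ : Finset (Fin n))) (p := fun l => σ l = true)
  simp only [Finset.card_univ, Fintype.card_fin] at htot
  have hb : 2 * (Finset.univ.filter (fun i => σ i = true)).card = n := hσ
  have htrue : (Finset.univ.filter (fun l => σ l = true)).card = m := by omega
  cases b
  · have : (Finset.univ.filter (fun l => ¬ σ l = true)) =
        (Finset.univ.filter (fun l => σ l = false)) := by
      apply Finset.filter_congr; intro x _; simp
    rw [← this]; omega
  · exact htrue

lemma balanced_sum_sgn {n m : ℕ} (σ : Fin n → Bool) (hσ : balanced σ) (hn : n = 2 * m) :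
    ∑ l, sgn σ l = 0 := by
  classical
  have h1 := balanced_class_card σ hσ hn true
  have h2 := balanced_class_card σ hσ hn false
  have : ∑ l, sgn σ l = ∑ l ∈ Finset.univ.filter (fun l => σ l = true), (1:ℝ)
      + ∑ l ∈ Finset.univ.filter (fun l => ¬ (σ l = true)), (-1:ℝ) := by
    rw [← Finset.sum_filter_add_sum_filter_not Finset.univ (fun l => σ l = true)]
    congr 1
    · apply Finset.sum_congr rfl; intro x hx; simp at hx; simp [sgn, hx]
    · apply Finset.sum_congr rfl; intro x hx; simp at hx; simp [sgn, hx]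
  rw [this]
  have : (Finset.univ.filter (fun l => ¬ σ l = true)) =
      (Finset.univ.filter (fun l => σ l = false)) := by
    apply Finset.filter_congr; intro x _; simp
  rw [this]
  simp [h1, h2]

lemma sgn_sq {n : ℕ} (σ : Fin n → Bool) (i : Fin n) : sgn σ i * sgn σ i = 1 := by
  simp [sgn]; cases σ i <;> norm_num

lemma sgn_eq_of_eq {n : ℕ} {σ : Fin n → Bool} {i j : Fin n} (h : σ i = σ j) :
    sgn σ i = sgn σ j := by simp [sgn, h]

lemma balanced_sum_sgn_weighted {n m : ℕ} (σ : Fin n → Bool) (hσ : balanced σ) (hn : n = 2 * m)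
    (i : Fin n) (B : ℝ) : ∑ l, (if σ i = σ l then B else 0) = m * B := by
  classical
  rw [← Finset.sum_filter, Finset.sum_const, nsmul_eq_mul]
  have heq : (Finset.univ.filter (fun l => σ i = σ l))
      = (Finset.univ.filter (fun l => σ l = σ i)) := by
    apply Finset.filter_congr; intro x _; exact ⟨Eq.symm, Eq.symm⟩
  rw [heq, balanced_class_card σ hσ hn (σ i)]

end Balanced

section ExpWForm
variable {k : ℕ}

lemma expW_apply_closed {n m : ℕ} (hk : 2 ≤ k) (p q : ℝ) (σ : Fin n → Bool)
    (hσ : balanced σ) (hn : n = 2 * m) (i j : Fin n) (hij : i ≠ j) :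
    expW n k p q σ i j = q * ((n - 2).choose (k - 2) : ℝ)
      + (if σ i = σ j then (p - q) * ((m - 2).choose (k - 2) : ℝ) else 0) := by
  classical
  rw [expW_apply p q σ i j hij]
  have hedge : ∀ e : KSet n k, (if i ∈ e.1 ∧ j ∈ e.1 then edgeP p q σ e.1 else 0)
      = (if i ∈ e.1 ∧ j ∈ e.1 then q else 0)
        + (if i ∈ e.1 ∧ j ∈ e.1 ∧ inCluster σ e.1 then p - q else 0) := by
    intro e
    unfold edgeP
    by_cases h1 : i ∈ e.1 ∧ j ∈ e.1
    · by_cases h2 : inCluster σ e.1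
      · rw [if_pos h1, if_pos h1, if_pos h2, if_pos ⟨h1.1, h1.2, h2⟩]; ring
      · rw [if_pos h1, if_pos h1, if_neg h2, if_neg (by tauto)]; ring
    · rw [if_neg h1, if_neg h1, if_neg (by tauto)]; ring
  rw [Finset.sum_congr rfl (fun e _ => hedge e), Finset.sum_add_distrib]
  congr 1
  · -- q * count of all pairs
    rw [← Finset.sum_filter, Finset.sum_const, nsmul_eq_mul]
    have hcount : (Finset.univ.filter (fun e : KSet n k => i ∈ e.1 ∧ j ∈ e.1)).card
        = (n - 2).choose (k - 2) := by
      have : (Finset.univ.filter (fun e : KSet n k => i ∈ e.1 ∧ j ∈ e.1))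
          = (Finset.univ.filter (fun e : KSet n k => i ∈ e.1 ∧ j ∈ e.1 ∧ e.1 ⊆ Finset.univ)) := by
        apply Finset.filter_congr; intro e _; simp [Finset.subset_univ]
      rw [this, count_subsets hk Finset.univ i j hij (Finset.mem_univ i) (Finset.mem_univ j)]
      simp
    rw [hcount]; ring
  · -- in-cluster part
    rw [← Finset.sum_filter, Finset.sum_const, nsmul_eq_mul]
    by_cases hs : σ i = σ j
    · rw [if_pos hs]
      set S := Finset.univ.filter (fun l => σ l = σ i) with hS
      have hiS : i ∈ S := by simp [hS]
      have hjS : j ∈ S := by simp [hS, hs.symm]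
      have hfil : (Finset.univ.filter (fun e : KSet n k => i ∈ e.1 ∧ j ∈ e.1 ∧ inCluster σ e.1))
          = (Finset.univ.filter (fun e : KSet n k => i ∈ e.1 ∧ j ∈ e.1 ∧ e.1 ⊆ S)) := by
        apply Finset.filter_congr; intro e _
        constructor
        · rintro ⟨h1, h2, h3⟩
          refine ⟨h1, h2, fun a ha => ?_⟩
          simp [hS]
          exact h3 a ha i h1
        · rintro ⟨h1, h2, h3⟩
          refine ⟨h1, h2, fun a ha b hb => ?_⟩
          have ha' := h3 ha; have hb' := h3 hb
          simp [hS] at ha' hb'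
          rw [ha', hb']
      rw [hfil, count_subsets hk S i j hij hiS hjS]
      have : S.card = m := balanced_class_card σ hσ hn (σ i)
      rw [this]; ring
    · rw [if_neg hs]
      have : (Finset.univ.filter (fun e : KSet n k => i ∈ e.1 ∧ j ∈ e.1 ∧ inCluster σ e.1))
          = ∅ := by
        rw [Finset.filter_eq_empty_iff]
        rintro e _ ⟨h1, h2, h3⟩
        exact hs (h3 i h1 j h2)
      rw [this]; simp

end ExpWForm
section LapForm
variable {n k : ℕ}

lemma GammaM_apply (σ : Fin n → Bool) (W : Matrix (Fin n) (Fin n) ℝ) (a b : Fin n) :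
    GammaM σ W a b = sgn σ a * W a b * sgn σ b := by
  simp [GammaM, Matrix.mul_apply, Matrix.diagonal, Finset.mul_sum, Finset.sum_ite_eq,
    Finset.sum_ite_eq']
  try rw [Finset.sum_comm]
  try simp [Finset.mul_sum, Finset.sum_ite_eq]
  try ring

lemma LGamma_apply (σ : Fin n → Bool) (W : Matrix (Fin n) (Fin n) ℝ) (i j : Fin n) :
    LGamma σ W i j = (if i = j then ∑ l, sgn σ i * W i l * sgn σ l else 0)
      - sgn σ i * W i j * sgn σ j := by
  classical
  simp only [LGamma, Matrix.sub_apply, Matrix.diagonal_apply]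
  rw [GammaM_apply]
  congr 1
  by_cases h : i = j
  · subst h; simp only [if_pos rfl]
    exact Finset.sum_congr rfl fun l _ => GammaM_apply σ W i l
  · simp [h]

lemma expLGamma_apply (p q : ℝ) (σ : Fin n → Bool) (i j : Fin n) :
    expLGamma n k p q σ i j
      = (if i = j then ∑ l, sgn σ i * expW n k p q σ i l * sgn σ l else 0)
        - sgn σ i * expW n k p q σ i j * sgn σ j := by
  classical
  simp only [expLGamma, Matrix.sum_apply, Matrix.smul_apply, smul_eq_mul]
  have key : ∀ E : KSet n k → Bool, hypProb p q σ E * LGamma σ (Wmat E) i j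
      = (if i = j then ∑ l, sgn σ i * (hypProb p q σ E * Wmat E i l) * sgn σ l else 0)
        - sgn σ i * (hypProb p q σ E * Wmat E i j) * sgn σ j := by
    intro E
    rw [LGamma_apply]
    by_cases h : i = j
    · subst h
      rw [if_pos rfl, if_pos rfl, mul_sub, Finset.mul_sum,
        Finset.sum_congr rfl (fun l _ => show hypProb p q σ E * (sgn σ i * Wmat E i l * sgn σ l)
          = sgn σ i * (hypProb p q σ E * Wmat E i l) * sgn σ l from by ring)]
      ring
    · simp only [if_neg h]; ring
  rw [Finset.sum_congr rfl fun E _ => key E, Finset.sum_sub_distrib]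
  congr 1
  · by_cases h : i = j
    · simp only [if_pos h]
      rw [Finset.sum_comm]
      refine Finset.sum_congr rfl fun l _ => ?_
      simp only [expW, Matrix.sum_apply, Matrix.smul_apply, smul_eq_mul]
      rw [Finset.mul_sum, Finset.sum_mul]
      try exact Finset.sum_congr rfl fun E _ => by ring
    · simp [h]
  · simp only [expW, Matrix.sum_apply, Matrix.smul_apply, smul_eq_mul]
    rw [Finset.mul_sum, Finset.sum_mul]
    try exact Finset.sum_congr rfl fun E _ => by ring

/-- The all-ones matrix. -/
noncomputable def Jmat (n : ℕ) : Matrix (Fin n) (Fin n) ℝ := Matrix.of fun _ _ => (1 : ℝ)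

lemma expLGamma_closed {m : ℕ} (hk : 2 ≤ k) (p q : ℝ) (σ : Fin (2*m) → Bool)
    (hσ : balanced σ) :
    expLGamma (2*m) k p q σ
      = (((p - q) * ((m - 2).choose (k - 2) : ℝ) / 2) * ((2*m : ℕ) : ℝ)) • (1 : Matrix (Fin (2*m)) (Fin (2*m)) ℝ)
        - ((p - q) * ((m - 2).choose (k - 2) : ℝ) / 2) • Jmat (2*m)
        - (q * ((2*m - 2).choose (k - 2) : ℝ) + (p - q) * ((m - 2).choose (k - 2) : ℝ) / 2) • outer σ := by
  classical
  have hexp : ∀ i l : Fin (2*m), sgn σ i * expW (2*m) k p q σ i l * sgn σ l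
      = q * ((2*m - 2).choose (k - 2) : ℝ) * (sgn σ i * sgn σ l)
        + (if σ i = σ l then (p - q) * ((m - 2).choose (k - 2) : ℝ) else 0)
        - (if l = i then q * ((2*m - 2).choose (k - 2) : ℝ)
            + (p - q) * ((m - 2).choose (k - 2) : ℝ) else 0) := by
    intro i l
    by_cases h : l = i
    · subst h
      rw [expW_diag]
      simp only [sgn, if_pos rfl]
      cases hi : σ l <;> simp [hi] <;> ring
    · rw [expW_apply_closed hk p q σ hσ rfl i l (Ne.symm h), if_neg h]
      simp only [sgn]
      cases hi : σ i <;> cases hl : σ l <;> simp [hi, hl] <;> ring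
  ext i j
  rw [expLGamma_apply]
  simp only [Matrix.sub_apply, Matrix.smul_apply, Matrix.one_apply, Jmat, Matrix.of_apply,
    outer, smul_eq_mul]
  by_cases h : i = j
  · subst h
    rw [if_pos rfl, if_pos rfl]
    rw [Finset.sum_congr rfl fun l _ => hexp i l]
    rw [Finset.sum_sub_distrib, Finset.sum_add_distrib]
    rw [← Finset.mul_sum, ← Finset.mul_sum, balanced_sum_sgn σ hσ rfl,
      balanced_sum_sgn_weighted σ hσ rfl i ((p - q) * ((m - 2).choose (k - 2) : ℝ)),
      Finset.sum_ite_eq' Finset.univ i]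
    rw [expW_diag]
    simp only [Finset.mem_univ, if_pos]
    have hsq : sgn σ i * sgn σ i = 1 := sgn_sq σ i
    push_cast
    linear_combination (q * ((2*m - 2).choose (k - 2) : ℝ)
      + (p - q) * ((m - 2).choose (k - 2) : ℝ) / 2) * hsq
  · rw [if_neg h, if_neg h]
    rw [expW_apply_closed hk p q σ hσ rfl i j h]
    simp only [sgn]
    cases hi : σ i <;> cases hj : σ j <;> simp [hi, hj] <;> ring
end LapForm
section PiAlg
variable {n m : ℕ} (σ : Fin n → Bool)

lemma J_mul_J : Jmat n * Jmat n = (n : ℝ) • Jmat n := by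
  ext i j; simp [Jmat, Matrix.mul_apply]

lemma S_mul_S : outer σ * outer σ = (n : ℝ) • outer σ := by
  ext i j
  simp only [outer, Matrix.mul_apply, Matrix.of_apply, Matrix.smul_apply, smul_eq_mul]
  have : ∀ l, sgn σ i * sgn σ l * (sgn σ l * sgn σ j) = sgn σ i * sgn σ j := by
    intro l
    have := sgn_sq σ l
    calc sgn σ i * sgn σ l * (sgn σ l * sgn σ j)
        = (sgn σ l * sgn σ l) * (sgn σ i * sgn σ j) := by ring
      _ = sgn σ i * sgn σ j := by rw [this]; ring
  rw [Finset.sum_congr rfl fun l _ => this l, Finset.sum_const]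
  simp [Finset.card_univ]
  try tauto

lemma J_mul_S (hσ : balanced σ) (hn : n = 2 * m) : Jmat n * outer σ = 0 := by
  ext i j
  simp only [Jmat, outer, Matrix.mul_apply, Matrix.of_apply, Matrix.zero_apply, one_mul]
  rw [← Finset.sum_mul, balanced_sum_sgn σ hσ hn, zero_mul]

lemma S_mul_J (hσ : balanced σ) (hn : n = 2 * m) : outer σ * Jmat n = 0 := by
  ext i j
  simp only [Jmat, outer, Matrix.mul_apply, Matrix.of_apply, Matrix.zero_apply, mul_one]
  rw [← Finset.mul_sum, balanced_sum_sgn σ hσ hn, mul_zero]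

lemma PiM_eq : PiM σ = 1 - (n : ℝ)⁻¹ • Jmat n - (n : ℝ)⁻¹ • outer σ := rfl

lemma PiM_mul_J (hσ : balanced σ) (hn : n = 2 * m) (hm : 0 < m) : PiM σ * Jmat n = 0 := by
  have hn0 : (n : ℝ) ≠ 0 := by
    simp [hn]; omega
  rw [PiM_eq, Matrix.sub_mul, Matrix.sub_mul, Matrix.smul_mul, Matrix.smul_mul, J_mul_J,
    S_mul_J σ hσ hn, Matrix.one_mul, smul_smul, inv_mul_cancel₀ hn0]
  simp

lemma PiM_mul_S (hσ : balanced σ) (hn : n = 2 * m) (hm : 0 < m) : PiM σ * outer σ = 0 := by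
  have hn0 : (n : ℝ) ≠ 0 := by
    simp [hn]; omega
  rw [PiM_eq, Matrix.sub_mul, Matrix.sub_mul, Matrix.smul_mul, Matrix.smul_mul, S_mul_S,
    J_mul_S σ hσ hn, Matrix.one_mul, smul_smul, inv_mul_cancel₀ hn0]
  simp

lemma PiM_idem (hσ : balanced σ) (hn : n = 2 * m) (hm : 0 < m) : PiM σ * PiM σ = PiM σ := by
  nth_rewrite 2 [PiM_eq]
  rw [Matrix.mul_sub, Matrix.mul_sub, Matrix.mul_smul, Matrix.mul_smul,
    PiM_mul_J σ hσ hn hm, PiM_mul_S σ hσ hn hm, Matrix.mul_one]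
  simp

lemma PiM_transpose : (PiM σ)ᵀ = PiM σ := by
  ext i j
  show PiM σ j i = PiM σ i j
  simp only [PiM, Matrix.sub_apply, Matrix.smul_apply, Matrix.one_apply, Matrix.of_apply,
    outer, smul_eq_mul]
  by_cases h : i = j
  · subst h; ring
  · rw [if_neg h, if_neg (Ne.symm h)]; ring

end PiAlg

section Part1
variable {k : ℕ}

theorem part1 (hk : 2 ≤ k) (p q : ℝ) (m : ℕ) (σ : Fin (2 * m) → Bool) (hσ : balanced σ) :
    PiM σ * expLGamma (2 * m) k p q σ * PiM σ
      = (((p - q) / 2) * ((2 * m : ℕ) : ℝ) * ((m - 2).choose (k - 2) : ℝ)) • PiM σ := by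
  rcases Nat.eq_zero_or_pos m with hm | hm
  · subst hm
    ext i j
    exact absurd i.2 (by omega)
  rw [expLGamma_closed hk p q σ hσ]
  rw [Matrix.mul_sub, Matrix.mul_sub, Matrix.mul_smul, Matrix.mul_smul, Matrix.mul_smul,
    Matrix.mul_one, PiM_mul_J σ hσ rfl hm, PiM_mul_S σ hσ rfl hm, smul_zero, smul_zero,
    sub_zero, sub_zero, Matrix.smul_mul, PiM_idem σ hσ rfl hm]
  congr 1
  ring

end Part1
section Proj
variable {N : ℕ}

lemma proj_form (P : Matrix (Fin N) (Fin N) ℝ) (hs : Pᵀ = P) (hi : P * P = P)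
    (x : Fin N → ℝ) : x ⬝ᵥ P.mulVec x = P.mulVec x ⬝ᵥ P.mulVec x := by
  have h1 : P.vecMul x = P.mulVec x := by rw [← hs, Matrix.vecMul_transpose]; rw [hs]
  calc x ⬝ᵥ P.mulVec x = x ⬝ᵥ (P * P).mulVec x := by rw [hi]
    _ = x ⬝ᵥ P.mulVec (P.mulVec x) := by rw [Matrix.mulVec_mulVec]
    _ = P.vecMul x ⬝ᵥ P.mulVec x := Matrix.dotProduct_mulVec _ _ _
    _ = _ := by rw [h1]

lemma dotProduct_self_nonneg' (v : Fin N → ℝ) : 0 ≤ v ⬝ᵥ v :=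
  Finset.sum_nonneg fun i _ => mul_self_nonneg _

lemma proj_form_nonneg (P : Matrix (Fin N) (Fin N) ℝ) (hs : Pᵀ = P) (hi : P * P = P)
    (x : Fin N → ℝ) : 0 ≤ x ⬝ᵥ P.mulVec x := by
  rw [proj_form P hs hi]; exact dotProduct_self_nonneg' _

lemma proj_form_le (P : Matrix (Fin N) (Fin N) ℝ) (hs : Pᵀ = P) (hi : P * P = P)
    (x : Fin N → ℝ) : x ⬝ᵥ P.mulVec x ≤ x ⬝ᵥ x := by
  have hs' : (1 - P)ᵀ = 1 - P := by rw [Matrix.transpose_sub, Matrix.transpose_one, hs]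
  have hi' : (1 - P) * (1 - P) = 1 - P := by
    rw [Matrix.sub_mul, Matrix.one_mul, Matrix.mul_sub, Matrix.mul_one, hi]
    abel
  have := proj_form_nonneg (1 - P) hs' hi' x
  rw [Matrix.sub_mulVec, Matrix.one_mulVec, dotProduct_sub] at this
  linarith

lemma dotProduct_self_eq_sum_sq (x : Fin N → ℝ) : x ⬝ᵥ x = ∑ i, x i ^ 2 := by
  simp [dotProduct, pow_two]

lemma sum_sq_pos_of_ne_zero {x : Fin N → ℝ} (hx : x ≠ 0) : 0 < ∑ i, x i ^ 2 := by
  obtain ⟨i0, hi0⟩ := Function.ne_iff.mp hx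
  exact Finset.sum_pos' (fun i _ => sq_nonneg _)
    ⟨i0, Finset.mem_univ _, pow_two_pos_of_ne_zero (by simpa using hi0)⟩

end Proj

section V0
variable {n m : ℕ}

lemma sum_sgn_sq {n : ℕ} (σ : Fin n → Bool) : ∑ i, sgn σ i * sgn σ i = (n : ℝ) := by
  rw [Finset.sum_congr rfl fun i _ => sgn_sq σ i]
  simp [Finset.card_univ]

lemma PiM_mulVec_eq_self (σ : Fin n → Bool) (x : Fin n → ℝ) (hn0 : (n:ℝ) ≠ 0)
    (hx1 : ∑ i, x i = 0) (hx2 : ∑ i, sgn σ i * x i = 0) :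
    (PiM σ).mulVec x = x := by
  funext i
  have key : ∀ j, PiM σ i j * x j
      = (if i = j then x j else 0) - (n:ℝ)⁻¹ * x j
        - (n:ℝ)⁻¹ * sgn σ i * (sgn σ j * x j) := by
    intro j
    simp only [PiM, Matrix.sub_apply, Matrix.smul_apply, Matrix.one_apply, Matrix.of_apply,
      outer, smul_eq_mul]
    by_cases h : i = j
    all_goals first
      | (rw [if_pos h, if_pos h]; ring)
      | (rw [if_neg h, if_neg h]; ring)
      | (rw [if_pos h]; ring)
      | (rw [if_neg h]; ring)
      | ring
  show ∑ j, PiM σ i j * x j = x i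
  rw [Finset.sum_congr rfl fun j _ => key j, Finset.sum_sub_distrib, Finset.sum_sub_distrib,
    Finset.sum_ite_eq Finset.univ i x, ← Finset.mul_sum, ← Finset.mul_sum, hx1, hx2]
  simp

lemma PiM_mulVec_ones (σ : Fin n → Bool) {m : ℕ} (hσ : balanced σ) (hn : n = 2*m)
    (hm : 0 < m) : (PiM σ).mulVec (fun _ => (1:ℝ)) = 0 := by
  have hn0 : (n : ℝ) ≠ 0 := by simp [hn]; omega
  funext i
  have key : ∀ j, PiM σ i j * 1
      = (if i = j then 1 else 0) - (n:ℝ)⁻¹ - (n:ℝ)⁻¹ * sgn σ i * sgn σ j := by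
    intro j
    simp only [PiM, Matrix.sub_apply, Matrix.smul_apply, Matrix.one_apply, Matrix.of_apply,
      outer, smul_eq_mul]
    by_cases h : i = j
    all_goals first
      | (rw [if_pos h, if_pos h]; ring)
      | (rw [if_neg h, if_neg h]; ring)
      | (rw [if_pos h]; ring)
      | (rw [if_neg h]; ring)
      | ring
  show ∑ j, PiM σ i j * 1 = 0
  rw [Finset.sum_congr rfl fun j _ => key j, Finset.sum_sub_distrib, Finset.sum_sub_distrib,
    ← Finset.mul_sum, balanced_sum_sgn σ hσ hn]
  simp only [Finset.sum_ite_eq Finset.univ i, Finset.mem_univ, if_pos, Finset.sum_const,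
    Finset.card_univ, Fintype.card_fin, nsmul_eq_mul, mul_one, mul_zero]
  field_simp
  ring

lemma PiM_mulVec_sgn (σ : Fin n → Bool) {m : ℕ} (hσ : balanced σ) (hn : n = 2*m)
    (hm : 0 < m) : (PiM σ).mulVec (sgn σ) = 0 := by
  have hn0 : (n : ℝ) ≠ 0 := by simp [hn]; omega
  funext i
  have key : ∀ j, PiM σ i j * sgn σ j
      = (if i = j then sgn σ j else 0) - (n:ℝ)⁻¹ * sgn σ j
        - (n:ℝ)⁻¹ * sgn σ i * (sgn σ j * sgn σ j) := by
    intro j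
    simp only [PiM, Matrix.sub_apply, Matrix.smul_apply, Matrix.one_apply, Matrix.of_apply,
      outer, smul_eq_mul]
    by_cases h : i = j
    all_goals first
      | (rw [if_pos h, if_pos h]; ring)
      | (rw [if_neg h, if_neg h]; ring)
      | (rw [if_pos h]; ring)
      | (rw [if_neg h]; ring)
      | ring
  show ∑ j, PiM σ i j * sgn σ j = 0
  rw [Finset.sum_congr rfl fun j _ => key j, Finset.sum_sub_distrib, Finset.sum_sub_distrib,
    Finset.sum_ite_eq Finset.univ i, ← Finset.mul_sum, balanced_sum_sgn σ hσ hn,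
    Finset.sum_congr rfl fun j _ => congrArg (fun t => (n:ℝ)⁻¹ * sgn σ i * t) (sgn_sq σ j)]
  simp only [Finset.mem_univ, if_pos, Finset.sum_const, Finset.card_univ, Fintype.card_fin,
    nsmul_eq_mul, mul_one, mul_zero, sub_zero]
  field_simp
  ring

noncomputable def sumMap (σ : Fin n → Bool) : (Fin n → ℝ) →ₗ[ℝ] ℝ × ℝ where
  toFun := fun x => (∑ i, x i, ∑ i, sgn σ i * x i)
  map_add' := fun x y => by
    simp [Prod.ext_iff, Finset.sum_add_distrib, mul_add]
  map_smul' := fun c x => by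
    simp [Prod.ext_iff, Finset.mul_sum, mul_comm, mul_left_comm]

lemma exists_V0 (σ : Fin n → Bool) (hσ : balanced σ) (hn : n = 2*m) (hm : 0 < m) :
    ∃ V : Submodule ℝ (Fin n → ℝ), Module.finrank ℝ V = n - 2 ∧
      ∀ x ∈ V, (PiM σ).mulVec x = x := by
  have hn0 : (n : ℝ) ≠ 0 := by simp [hn]; omega
  have hs0 := balanced_sum_sgn σ hσ hn
  have hs2 := sum_sgn_sq σ
  refine ⟨LinearMap.ker (sumMap σ), ?_, ?_⟩
  · have hsurj : Function.Surjective (sumMap σ) := by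
      intro z
      refine ⟨fun i => (z.1 + sgn σ i * z.2) / n, ?_⟩
      have h1 : ∑ i, (z.1 + sgn σ i * z.2) / (n:ℝ) = z.1 := by
        rw [← Finset.sum_div, Finset.sum_add_distrib, ← Finset.sum_mul, hs0, zero_mul, add_zero,
          Finset.sum_const]
        simp only [Finset.card_univ, Fintype.card_fin, nsmul_eq_mul]
        field_simp
      have h2 : ∑ i, sgn σ i * ((z.1 + sgn σ i * z.2) / (n:ℝ)) = z.2 := by
        have : ∀ i, sgn σ i * ((z.1 + sgn σ i * z.2) / (n:ℝ))
            = (sgn σ i * z.1) / n + (sgn σ i * sgn σ i) * z.2 / n := by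
          intro i; ring
        rw [Finset.sum_congr rfl fun i _ => this i, Finset.sum_add_distrib, ← Finset.sum_div,
          ← Finset.sum_mul, hs0, ← Finset.sum_div, ← Finset.sum_mul, hs2]
        field_simp
        ring
      exact Prod.ext h1 h2
    have hrank := LinearMap.finrank_range_add_finrank_ker (sumMap σ)
    rw [LinearMap.range_eq_top.mpr hsurj, finrank_top] at hrank
    have h2 : Module.finrank ℝ (ℝ × ℝ) = 2 := by
      rw [Module.finrank_prod]; simp
    have hpi : Module.finrank ℝ (Fin n → ℝ) = n := by
      rw [Module.finrank_pi]; simp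
    rw [h2, hpi] at hrank
    omega
  · intro x hx
    rw [LinearMap.mem_ker] at hx
    have hx1 : ∑ i, x i = 0 := congrArg Prod.fst hx
    have hx2 : ∑ i, sgn σ i * x i = 0 := congrArg Prod.snd hx
    exact PiM_mulVec_eq_self σ x hn0 hx1 hx2

end V0
section Lambda3
open Module

lemma csSup_eq_of_mem_of_ub {S : Set ℝ} {a : ℝ} (ha : a ∈ S) (hub : ∀ r ∈ S, r ≤ a) :
    sSup S = a :=
  le_antisymm (csSup_le ⟨a, ha⟩ hub) (le_csSup ⟨a, hub⟩ ha)

lemma lambda3_zero_of_small {N : ℕ} (M : Matrix (Fin N) (Fin N) ℝ) (h : N - 2 = 0) :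
    lambda3 M = 0 := by
  unfold lambda3
  have hset : {r : ℝ | ∃ V : Submodule ℝ (Fin N → ℝ), Module.finrank ℝ V = N - 2 ∧
      ∀ x ∈ V, r * (∑ i, x i ^ 2) ≤ x ⬝ᵥ M.mulVec x} = Set.univ := by
    apply Set.eq_univ_iff_forall.mpr
    intro r
    refine ⟨⊥, by rw [h, finrank_bot], ?_⟩
    intro x hx
    rw [Submodule.mem_bot] at hx
    subst hx
    simp [Matrix.mulVec_zero, dotProduct_zero]
  rw [hset]
  exact Real.sSup_of_not_bddAbove not_bddAbove_univ

lemma exists_Vker {n m : ℕ} (σ : Fin n → Bool) (hσ : balanced σ) (hn : n = 2*m) (hm : 0 < m) :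
    ∃ V : Submodule ℝ (Fin n → ℝ), Module.finrank ℝ V = 2 ∧
      ∀ x ∈ V, (PiM σ).mulVec x = 0 := by
  classical
  set u : Fin n → ℝ := fun _ => 1 with hu
  have hLI : LinearIndependent ℝ ![u, sgn σ] := by
    rw [LinearIndependent.pair_iff]
    intro s t hst
    have h1 : (Finset.univ.filter (fun l => σ l = true)).card = m :=
      balanced_class_card σ hσ hn true
    have h2 : (Finset.univ.filter (fun l => σ l = false)).card = m :=
      balanced_class_card σ hσ hn false
    obtain ⟨i0, hi0⟩ := Finset.card_pos.mp (by omega : 0 < (Finset.univ.filter (fun l => σ l = true)).card)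
    obtain ⟨i1, hi1⟩ := Finset.card_pos.mp (by omega : 0 < (Finset.univ.filter (fun l => σ l = false)).card)
    rw [Finset.mem_filter] at hi0 hi1
    have e0 := congrFun hst i0
    have e1 := congrFun hst i1
    simp [hu, sgn, hi0.2, hi1.2] at e0 e1
    constructor <;> linarith
  refine ⟨Submodule.span ℝ (Set.range ![u, sgn σ]), ?_, ?_⟩
  · rw [finrank_span_eq_card hLI]
    simp
  · intro x hx
    induction hx using Submodule.span_induction with
    | mem y hy =>
      obtain ⟨i, rfl⟩ := hy
      fin_cases i
      · simpa [hu] using PiM_mulVec_ones σ hσ hn hm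
      · simpa using PiM_mulVec_sgn σ hσ hn hm
    | zero => simp [Matrix.mulVec_zero]
    | add y z hy hz hy' hz' => rw [Matrix.mulVec_add, hy', hz']; simp
    | smul a y hy hy' => rw [Matrix.mulVec_smul, hy']; simp

lemma lambda3_smul_PiM {n m : ℕ} (σ : Fin n → Bool) (hσ : balanced σ) (hn : n = 2*m)
    (c : ℝ) :
    lambda3 (c • PiM σ) = if m ≤ 1 then 0 else if c < 0 ∧ m = 2 then 0 else c := by
  classical
  by_cases hm1 : m ≤ 1
  · rw [if_pos hm1]
    exact lambda3_zero_of_small _ (by omega)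
  rw [if_neg hm1]
  push_neg at hm1
  have hm : 0 < m := by omega
  have hT := PiM_transpose σ
  have hI := PiM_idem σ hσ hn hm
  obtain ⟨V0, hV0rank, hV0fix⟩ := exists_V0 σ hσ hn hm
  unfold lambda3
  set S := {r : ℝ | ∃ V : Submodule ℝ (Fin n → ℝ), Module.finrank ℝ V = n - 2 ∧
      ∀ x ∈ V, r * (∑ i, x i ^ 2) ≤ x ⬝ᵥ (c • PiM σ).mulVec x} with hSdef
  have hmemc : c ∈ S := by
    refine ⟨V0, hV0rank, fun x hx => ?_⟩
    rw [Matrix.smul_mulVec, hV0fix x hx, dotProduct_smul, smul_eq_mul,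
      dotProduct_self_eq_sum_sq]
  by_cases hc : c < 0
  · by_cases hm2 : m = 2
    · rw [if_pos ⟨hc, hm2⟩]
      obtain ⟨Vk, hVkrank, hVkzero⟩ := exists_Vker σ hσ hn hm
      have hmem0 : (0:ℝ) ∈ S := by
        refine ⟨Vk, by omega, fun x hx => ?_⟩
        rw [Matrix.smul_mulVec, hVkzero x hx, smul_zero, dotProduct_zero]
        simp
      refine csSup_eq_of_mem_of_ub hmem0 ?_
      rintro r ⟨V, hrank, hle⟩
      have hne : V ≠ ⊥ := by
        intro hb; rw [hb, finrank_bot] at hrank; omega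
      obtain ⟨x, hx, hx0⟩ := (Submodule.ne_bot_iff V).mp hne
      have h1 := hle x hx
      rw [Matrix.smul_mulVec, dotProduct_smul, smul_eq_mul] at h1
      have h2 : c * (x ⬝ᵥ (PiM σ).mulVec x) ≤ 0 :=
        mul_nonpos_of_nonpos_of_nonneg hc.le (proj_form_nonneg _ hT hI x)
      have h3 := sum_sq_pos_of_ne_zero hx0
      nlinarith
    · rw [if_neg (by tauto)]
      refine csSup_eq_of_mem_of_ub hmemc ?_
      rintro r ⟨V, hrank, hle⟩
      have hsum := Submodule.finrank_sup_add_finrank_inf_eq V V0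
      have hsup : Module.finrank ℝ ↥(V ⊔ V0) ≤ n := by
        refine le_trans (Submodule.finrank_le _) ?_
        rw [Module.finrank_pi]; simp
      have hinf : 0 < Module.finrank ℝ ↥(V ⊓ V0) := by
        rw [hrank, hV0rank] at hsum
        omega
      have hne : V ⊓ V0 ≠ ⊥ := by
        intro hb; rw [hb, finrank_bot] at hinf; omega
      obtain ⟨x, hx, hx0⟩ := (Submodule.ne_bot_iff _).mp hne
      rw [Submodule.mem_inf] at hx
      have h1 := hle x hx.1
      rw [Matrix.smul_mulVec, hV0fix x hx.2, dotProduct_smul, smul_eq_mul,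
        dotProduct_self_eq_sum_sq] at h1
      exact le_of_mul_le_mul_right h1 (sum_sq_pos_of_ne_zero hx0)
  · push_neg at hc
    rw [if_neg (fun h => absurd h.1 (not_lt.mpr hc))]
    refine csSup_eq_of_mem_of_ub hmemc ?_
    rintro r ⟨V, hrank, hle⟩
    have hne : V ≠ ⊥ := by
      intro hb; rw [hb, finrank_bot] at hrank; omega
    obtain ⟨x, hx, hx0⟩ := (Submodule.ne_bot_iff V).mp hne
    have h1 := hle x hx
    rw [Matrix.smul_mulVec, dotProduct_smul, smul_eq_mul] at h1
    have h2 : c * (x ⬝ᵥ (PiM σ).mulVec x) ≤ c * (x ⬝ᵥ x) :=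
      mul_le_mul_of_nonneg_left (proj_form_le _ hT hI x) hc
    rw [dotProduct_self_eq_sum_sq] at h2
    exact le_of_mul_le_mul_right (le_trans h1 h2) (sum_sq_pos_of_ne_zero hx0)

end Lambda3
section Limit
open Filter

lemma cast_choose_prod (a r : ℕ) (h : r ≤ a) :
    ((a.choose r : ℕ) : ℝ) = (∏ i ∈ Finset.range r, ((a : ℝ) - i)) / (r.factorial : ℝ) := by
  rw [Nat.choose_eq_descFactorial_div_factorial,
    Nat.cast_div (Nat.factorial_dvd_descFactorial a r)
      (by exact_mod_cast Nat.factorial_ne_zero r),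
    Nat.descFactorial_eq_prod_range, Nat.cast_prod]
  congr 1
  refine Finset.prod_congr rfl fun i hi => ?_
  rw [Finset.mem_range] at hi
  rw [Nat.cast_sub (by omega)]

lemma factor_tendsto (a b : ℝ) :
    Tendsto (fun m : ℕ => ((m:ℝ) - a) / (2 * (m:ℝ) - b)) atTop (nhds (1/2)) := by
  have h1 : Tendsto (fun m : ℕ => 1 - a * ((m:ℝ))⁻¹) atTop (nhds (1 - a * 0)) :=
    tendsto_const_nhds.sub (tendsto_inv_atTop_nhds_zero_nat.const_mul a)
  have h2 : Tendsto (fun m : ℕ => 2 - b * ((m:ℝ))⁻¹) atTop (nhds (2 - b * 0)) :=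
    tendsto_const_nhds.sub (tendsto_inv_atTop_nhds_zero_nat.const_mul b)
  have h3 := h1.div h2 (by norm_num)
  have hval : (1 - a * 0) / (2 - b * 0) = (1:ℝ)/2 := by norm_num
  rw [hval] at h3
  refine h3.congr' ?_
  filter_upwards [eventually_ge_atTop 1] with m hm
  have hm0 : (m:ℝ) ≠ 0 := by
    have : (1:ℝ) ≤ (m:ℝ) := by exact_mod_cast hm
    linarith
  have key : (1 - a * (m:ℝ)⁻¹) = ((m:ℝ) - a) * (m:ℝ)⁻¹ := by field_simp
  have key2 : (2 - b * (m:ℝ)⁻¹) = (2*(m:ℝ) - b) * (m:ℝ)⁻¹ := by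
    field_simp
    try ring
  show (1 - a * (m:ℝ)⁻¹) / (2 - b * (m:ℝ)⁻¹) = _
  rw [key, key2, mul_div_mul_right _ _ (inv_ne_zero hm0)]

lemma choose_ratio_tendsto (k : ℕ) (hk : 2 ≤ k) :
    Tendsto (fun m : ℕ => (m:ℝ) * (((m-2).choose (k-2) : ℕ) : ℝ)
        / ((((2*m-1).choose (k-1) : ℕ)) : ℝ))
      atTop (nhds (((k:ℝ)-1)/2^(k-1))) := by
  classical
  set uc : ℕ → ℝ := fun i => if i = 0 then 0 else ((i:ℝ) + 1) with huc
  have htprod : Tendsto (fun m : ℕ => ∏ i ∈ Finset.range (k-1),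
      (((m:ℝ) - uc i) / (2*(m:ℝ) - (1+(i:ℝ))))) atTop (nhds ((1/2 : ℝ)^(k-1))) := by
    have h := tendsto_finset_prod (f := fun i (m : ℕ) => ((m:ℝ) - uc i) / (2*(m:ℝ) - (1+(i:ℝ))))
      (a := fun _ => (1/2 : ℝ)) (Finset.range (k-1)) (fun i _ => factor_tendsto (uc i) (1+(i:ℝ)))
    simpa [Finset.prod_const, Finset.card_range] using h
  have hfac2 : ((k-2).factorial : ℝ) ≠ 0 := by exact_mod_cast Nat.factorial_ne_zero (k-2)
  have htot := htprod.const_mul (((k-1).factorial : ℝ) / ((k-2).factorial : ℝ))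
  have hfactval : ((k-1).factorial : ℝ) = ((k:ℝ) - 1) * ((k-2).factorial : ℝ) := by
    have h1 : k - 1 = (k-2) + 1 := by omega
    rw [h1, Nat.factorial_succ, Nat.cast_mul]
    congr 1
    rw [Nat.cast_add, Nat.cast_sub hk]
    norm_num
    try ring
  have hval : ((k-1).factorial : ℝ) / ((k-2).factorial : ℝ) * ((1/2 : ℝ))^(k-1)
      = ((k:ℝ)-1)/2^(k-1) := by
    rw [hfactval, div_pow, one_pow]
    field_simp
  rw [hval] at htot
  refine htot.congr' ?_
  filter_upwards [eventually_ge_atTop (k+2)] with m hm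
  have hm2 : 2 ≤ m := by omega
  have hc1 : ((m-2 : ℕ):ℝ) = (m:ℝ) - 2 := by
    rw [Nat.cast_sub hm2]; norm_num
  have hc2 : ((2*m-1 : ℕ):ℝ) = 2*(m:ℝ) - 1 := by
    rw [Nat.cast_sub (by omega)]; push_cast; ring
  rw [cast_choose_prod (m-2) (k-2) (by omega), cast_choose_prod (2*m-1) (k-1) (by omega)]
  have hp1 : ∏ i ∈ Finset.range (k-2), (((m-2:ℕ):ℝ) - i)
      = ∏ i ∈ Finset.range (k-2), ((m:ℝ) - uc (i+1)) := by
    refine Finset.prod_congr rfl fun i _ => ?_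
    rw [hc1]
    simp only [huc, Nat.succ_ne_zero, if_neg]
    push_cast; ring
  have hp2 : ∏ i ∈ Finset.range (k-1), (((2*m-1:ℕ):ℝ) - i)
      = ∏ i ∈ Finset.range (k-1), (2*(m:ℝ) - (1+(i:ℝ))) := by
    refine Finset.prod_congr rfl fun i _ => ?_
    rw [hc2]; ring
  rw [hp1, hp2]
  have hpu : (m:ℝ) * ∏ i ∈ Finset.range (k-2), ((m:ℝ) - uc (i+1))
      = ∏ i ∈ Finset.range (k-1), ((m:ℝ) - uc i) := by
    have h1 : k - 1 = (k-2) + 1 := by omega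
    rw [h1, Finset.prod_range_succ']
    simp only [huc, if_pos rfl]
    rw [sub_zero, mul_comm]
  have hP2pos : ∀ i ∈ Finset.range (k-1), (0:ℝ) < 2*(m:ℝ) - (1+(i:ℝ)) := by
    intro i hi
    rw [Finset.mem_range] at hi
    have hik : (i:ℝ) ≤ (k:ℝ) - 2 := by
      have h' : (i:ℝ) ≤ ((k - 2 : ℕ):ℝ) := by exact_mod_cast (by omega : i ≤ k - 2)
      rwa [Nat.cast_sub hk] at h'
    have hmk : (k:ℝ) + 2 ≤ (m:ℝ) := by exact_mod_cast hm
    linarith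
  rw [Finset.prod_div_distrib, ← hpu]
  have hP2 : (0:ℝ) < ∏ i ∈ Finset.range (k-1), (2*(m:ℝ) - (1+(i:ℝ))) :=
    Finset.prod_pos hP2pos
  have hf1 : ((k-1).factorial : ℝ) ≠ 0 := by exact_mod_cast Nat.factorial_ne_zero (k-1)
  field_simp

end Limit
/-- For balanced `σ`, `Π (E L_Γ) Π = ((p-q)/2) n C(n/2-2, k-2) · Π`;
consequently `λ₃(Π (E L_Γ) Π) = ((k-1)/2^{k-1})(α-β) log n + o(log n)`. -/
theorem exp_laplacian_formula (k : ℕ) (hk : 2 ≤ k) (α β : ℝ) (hα : 0 < α) (hβ : 0 < β) :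
    (∀ m : ℕ, ∀ σ : Fin (2 * m) → Bool, balanced σ →
      PiM σ * expLGamma (2 * m) k (pParam k α (2 * m)) (pParam k β (2 * m)) σ * PiM σ
        = (((pParam k α (2 * m) - pParam k β (2 * m)) / 2) * ((2 * m : ℕ) : ℝ) *
            ((m - 2).choose (k - 2) : ℝ)) • PiM σ) ∧
    (∃ err : ℕ → ℝ, Tendsto (fun m : ℕ => err m / Real.log (2 * m)) atTop (nhds 0) ∧
      ∀ m : ℕ, ∀ σ : Fin (2 * m) → Bool, balanced σ →
        lambda3 (PiM σ * expLGamma (2 * m) k (pParam k α (2 * m)) (pParam k β (2 * m)) σ * PiM σ)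
          = ((k : ℝ) - 1) / 2 ^ (k - 1) * (α - β) * Real.log (2 * m) + err m) := by
  classical
  have hpart1 : ∀ m : ℕ, ∀ σ : Fin (2 * m) → Bool, balanced σ →
      PiM σ * expLGamma (2 * m) k (pParam k α (2 * m)) (pParam k β (2 * m)) σ * PiM σ
        = (((pParam k α (2 * m) - pParam k β (2 * m)) / 2) * ((2 * m : ℕ) : ℝ) *
            ((m - 2).choose (k - 2) : ℝ)) • PiM σ :=
    fun m σ hσ => part1 hk _ _ m σ hσ
  refine ⟨hpart1, ?_⟩
  refine ⟨fun m => (if m ≤ 1 then (0:ℝ) else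
      if ((pParam k α (2 * m) - pParam k β (2 * m)) / 2) * ((2 * m : ℕ) : ℝ) *
          ((m - 2).choose (k - 2) : ℝ) < 0 ∧ m = 2 then 0
      else ((pParam k α (2 * m) - pParam k β (2 * m)) / 2) * ((2 * m : ℕ) : ℝ) *
          ((m - 2).choose (k - 2) : ℝ))
    - ((k : ℝ) - 1) / 2 ^ (k - 1) * (α - β) * Real.log (2 * m), ?_, ?_⟩
  · -- the tendsto part
    have hcore := choose_ratio_tendsto k hk
    have h2 := (hcore.const_mul (α - β)).sub_const (((k:ℝ) - 1) / 2 ^ (k - 1) * (α - β))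
    have hval : (α - β) * (((k:ℝ)-1)/2^(k-1)) - ((k:ℝ) - 1) / 2 ^ (k - 1) * (α - β) = 0 := by
      ring
    rw [hval] at h2
    refine Tendsto.congr' ?_ h2
    filter_upwards [eventually_ge_atTop (k+3)] with m hm
    have hm1 : ¬ m ≤ 1 := by omega
    have hm2 : ¬ (((pParam k α (2 * m) - pParam k β (2 * m)) / 2) * ((2 * m : ℕ) : ℝ) *
          ((m - 2).choose (k - 2) : ℝ) < 0 ∧ m = 2) := fun h => by omega
    rw [if_neg hm1, if_neg hm2]
    have hD : (0:ℝ) < (((2*m-1).choose (k-1) : ℕ) : ℝ) := by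
      exact_mod_cast Nat.choose_pos (by omega : k - 1 ≤ 2*m - 1)
    have hL : (0:ℝ) < Real.log (2 * (m:ℝ)) := by
      apply Real.log_pos
      have : (1:ℝ) ≤ (m:ℝ) := by exact_mod_cast (by omega : 1 ≤ m)
      linarith
    have hlogcast : Real.log (((2*m : ℕ)):ℝ) = Real.log (2 * (m:ℝ)) := by
      norm_num
    unfold pParam
    rw [hlogcast]
    have hD' : (((2*m-1).choose (k-1) : ℕ) : ℝ) ≠ 0 := ne_of_gt hD
    have hL' : Real.log (2 * (m:ℝ)) ≠ 0 := ne_of_gt hL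
    have hL'' : Real.log ((m:ℝ) * 2) ≠ 0 := by rw [mul_comm]; exact hL'
    push_cast
    field_simp
  · -- the equality part
    intro m σ hσ
    rw [hpart1 m σ hσ, lambda3_smul_PiM σ hσ rfl]
    ring
end

section
/- Let n be even, k ≥ 2 an integer, and let σ, x ∈ {±1}^n be balanced vectors with Hamming distance d = #{v : x_v ≠ σ_v} (necessarily even). Then the number of k-subsets e of [n] on which x is constant but σ is not constant equals 2( C(n/2, k) − C(d/2, k) − C((n−d)/2, k) ), and the same formula gives the number of k-subsets on which σ is constant but x is not. -/
open Finset

open scoped Classical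

private lemma card_const_fibers {α V : Type*} [Fintype α] [DecidableEq α] [Fintype V] [DecidableEq V]
    {k : ℕ} (hk : 1 ≤ k) (f : α → V) :
    (univ.filter (fun e : Finset α => e.card = k ∧ ∀ i ∈ e, ∀ j ∈ e, f i = f j)).card
      = ∑ v : V, ((univ.filter (fun i => f i = v)).card).choose k := by
  classical
  have heq : univ.filter (fun e : Finset α => e.card = k ∧ ∀ i ∈ e, ∀ j ∈ e, f i = f j)
      = (univ : Finset V).biUnion
          (fun v => (univ.filter (fun i => f i = v)).powersetCard k) := by
    ext e
    simp only [mem_filter, mem_univ, true_and, mem_biUnion, Finset.mem_powersetCard]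
    constructor
    · rintro ⟨hcard, hconst⟩
      obtain ⟨i0, hi0⟩ : e.Nonempty := Finset.card_pos.mp (by omega)
      refine ⟨f i0, fun j hj => ?_, hcard⟩
      simp only [mem_filter, mem_univ, true_and]
      exact hconst j hj i0 hi0
    · rintro ⟨v, hsub, hcard⟩
      refine ⟨hcard, fun i hi j hj => ?_⟩
      have h1 := (mem_filter.mp (hsub hi)).2
      have h2 := (mem_filter.mp (hsub hj)).2
      rw [h1, h2]
  rw [heq, Finset.card_biUnion]
  · simp [Finset.card_powersetCard]
  · intro v _ w _ hvw
    rw [Function.onFun, Finset.disjoint_left]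
    intro e he1 he2
    rw [Finset.mem_powersetCard] at he1 he2
    obtain ⟨i0, hi0⟩ : e.Nonempty := Finset.card_pos.mp (by omega)
    have h1 := (mem_filter.mp (he1.1 hi0)).2
    have h2 := (mem_filter.mp (he2.1 hi0)).2
    exact hvw (h1.symm.trans h2)

private lemma count_one_side {n : ℕ} (k : ℕ) (hk1 : 1 ≤ k)
    (x σ : Fin n → Bool) (a b : ℕ)
    (hTx : (univ.filter (fun i => x i = true)).card = a + b)
    (hFx : (univ.filter (fun i => x i = false)).card = a + b)
    (hTT : (univ.filter (fun i => x i = true ∧ σ i = true)).card = a)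
    (hTF : (univ.filter (fun i => x i = true ∧ σ i = false)).card = b)
    (hFT : (univ.filter (fun i => x i = false ∧ σ i = true)).card = b)
    (hFF : (univ.filter (fun i => x i = false ∧ σ i = false)).card = a) :
    ((univ.filter (fun e : Finset (Fin n) =>
        e.card = k ∧ (∀ i ∈ e, ∀ j ∈ e, x i = x j) ∧
          ¬(∀ i ∈ e, ∀ j ∈ e, σ i = σ j))).card : ℤ)
      = 2 * (((a + b).choose k : ℤ) - (b.choose k : ℤ) - (a.choose k : ℤ)) := by
  classical
  -- count of k-sets where x is constant
  have keyx := card_const_fibers (V := Bool) hk1 x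
  rw [Fintype.sum_bool, hTx, hFx] at keyx
  -- count of k-sets where both are constant
  have keyp := card_const_fibers (V := Bool × Bool) hk1 (fun i => (x i, σ i))
  rw [Fintype.sum_prod_type, Fintype.sum_bool] at keyp
  rw [Fintype.sum_bool, Fintype.sum_bool] at keyp
  have fib : ∀ (p q : Bool), (univ.filter (fun i => (x i, σ i) = (p, q)))
      = univ.filter (fun i => x i = p ∧ σ i = q) := by
    intro p q; ext i; simp [Prod.ext_iff]
  rw [fib, fib, fib, fib, hTT, hTF, hFT, hFF] at keyp
  -- both-constant set equals pair-constant set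
  have hboth : univ.filter (fun e : Finset (Fin n) =>
        e.card = k ∧ ((∀ i ∈ e, ∀ j ∈ e, x i = x j) ∧ (∀ i ∈ e, ∀ j ∈ e, σ i = σ j)))
      = univ.filter (fun e : Finset (Fin n) =>
        e.card = k ∧ ∀ i ∈ e, ∀ j ∈ e, (x i, σ i) = (x j, σ j)) := by
    ext e
    simp only [mem_filter, mem_univ, true_and, Prod.ext_iff]
    constructor
    · rintro ⟨hc, hX, hS⟩
      exact ⟨hc, fun i hi j hj => ⟨hX i hi j hj, hS i hi j hj⟩⟩
    · rintro ⟨hc, h⟩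
      exact ⟨hc, fun i hi j hj => (h i hi j hj).1, fun i hi j hj => (h i hi j hj).2⟩
  -- split the x-constant sets by whether σ is constant
  have hsplit := Finset.card_filter_add_card_filter_not
    (s := univ.filter (fun e : Finset (Fin n) =>
        e.card = k ∧ ∀ i ∈ e, ∀ j ∈ e, x i = x j))
    (p := fun e => ∀ i ∈ e, ∀ j ∈ e, σ i = σ j)
  rw [Finset.filter_filter, Finset.filter_filter] at hsplit
  have e1 : univ.filter (fun e : Finset (Fin n) =>
        (e.card = k ∧ ∀ i ∈ e, ∀ j ∈ e, x i = x j) ∧ (∀ i ∈ e, ∀ j ∈ e, σ i = σ j))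
      = univ.filter (fun e : Finset (Fin n) =>
        e.card = k ∧ ((∀ i ∈ e, ∀ j ∈ e, x i = x j) ∧ (∀ i ∈ e, ∀ j ∈ e, σ i = σ j))) := by
    ext e; simp only [mem_filter, mem_univ, true_and]; tauto
  have e2 : univ.filter (fun e : Finset (Fin n) =>
        (e.card = k ∧ ∀ i ∈ e, ∀ j ∈ e, x i = x j) ∧ ¬(∀ i ∈ e, ∀ j ∈ e, σ i = σ j))
      = univ.filter (fun e : Finset (Fin n) =>
        e.card = k ∧ (∀ i ∈ e, ∀ j ∈ e, x i = x j) ∧ ¬(∀ i ∈ e, ∀ j ∈ e, σ i = σ j)) := by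
    ext e; simp only [mem_filter, mem_univ, true_and]; tauto
  rw [e1, e2, hboth] at hsplit
  have keyp' : (univ.filter (fun e : Finset (Fin n) =>
        e.card = k ∧ ∀ i ∈ e, ∀ j ∈ e, (x i, σ i) = (x j, σ j))).card
      = a.choose k + b.choose k + (b.choose k + a.choose k) := by
    convert keyp using 2
    ext e
    simp
  have keyx' : (univ.filter (fun e : Finset (Fin n) =>
        e.card = k ∧ ∀ i ∈ e, ∀ j ∈ e, x i = x j)).card
      = (a + b).choose k + (a + b).choose k := by
    convert keyx using 2
    ext e
    simp
  rw [keyp', keyx'] at hsplit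
  omega

private lemma bool_fiber_split {n : ℕ} (p q : Fin n → Bool) (bp : Bool) :
    (univ.filter (fun i => p i = bp ∧ q i = true)).card
      + (univ.filter (fun i => p i = bp ∧ q i = false)).card
      = (univ.filter (fun i => p i = bp)).card := by
  classical
  have h := Finset.card_filter_add_card_filter_not
    (s := univ.filter (fun i => p i = bp)) (p := fun i => q i = true)
  have hpos : univ.filter (fun i => p i = bp ∧ q i = true)
      = (univ.filter (fun i => p i = bp)).filter (fun i => q i = true) := by
    ext i; simp
  have hneg : univ.filter (fun i => p i = bp ∧ q i = false)
      = (univ.filter (fun i => p i = bp)).filter (fun i => ¬ q i = true) := by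
    ext i; simp
  rw [hpos, hneg]
  exact h

private lemma bool_total_split {n : ℕ} (p : Fin n → Bool) :
    (univ.filter (fun i => p i = true)).card
      + (univ.filter (fun i => p i = false)).card = n := by
  classical
  have h := Finset.card_filter_add_card_filter_not
    (s := (univ : Finset (Fin n))) (p := fun i => p i = true)
  rw [Finset.card_univ, Fintype.card_fin] at h
  have hneg : univ.filter (fun i => p i = false)
      = univ.filter (fun i => ¬ p i = true) := by
    ext i; simp
  rw [hneg]
  exact h


/-- For balanced `x, σ ∈ {±1}ⁿ` at Hamming distance `d` (necessarily even),
the number of `k`-subsets on which `x` is constant but `σ` is not equals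
`2(C(n/2,k) - C(d/2,k) - C((n-d)/2,k))`, and likewise with the roles of `x` and `σ` swapped. -/
theorem count_crossing_edges (n k : ℕ) (hn : Even n) (hn0 : 0 < n) (hk : 2 ≤ k)
    (x σ : Fin n → Bool) (hx : balanced x) (hσ : balanced σ)
    (d : ℕ) (hd : d = (Finset.univ.filter (fun v => x v ≠ σ v)).card) :
    Even d ∧
    ((Finset.univ.filter (fun e : Finset (Fin n) =>
        e.card = k ∧ (∀ i ∈ e, ∀ j ∈ e, x i = x j) ∧
          ¬(∀ i ∈ e, ∀ j ∈ e, σ i = σ j))).card : ℤ)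
      = 2 * (((n / 2).choose k : ℤ) - ((d / 2).choose k : ℤ)
          - (((n - d) / 2).choose k : ℤ)) ∧
    ((Finset.univ.filter (fun e : Finset (Fin n) =>
        e.card = k ∧ (∀ i ∈ e, ∀ j ∈ e, σ i = σ j) ∧
          ¬(∀ i ∈ e, ∀ j ∈ e, x i = x j))).card : ℤ)
      = 2 * (((n / 2).choose k : ℤ) - ((d / 2).choose k : ℤ)
          - (((n - d) / 2).choose k : ℤ)) := by
  classical
  have hcomm : ∀ p q : Bool, univ.filter (fun i => σ i = p ∧ x i = q)
      = univ.filter (fun i => x i = q ∧ σ i = p) := by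
    intro p q; ext i; simp only [mem_filter, mem_univ, true_and]; tauto
  have h1 := bool_fiber_split x σ true
  have h4 := bool_fiber_split x σ false
  have h2 := bool_fiber_split σ x true
  have h6 := bool_fiber_split σ x false
  rw [hcomm, hcomm] at h2
  rw [hcomm, hcomm] at h6
  have h3 := bool_total_split x
  have h5 := bool_total_split σ
  have hdsum : d = (univ.filter (fun i => x i = true ∧ σ i = false)).card
      + (univ.filter (fun i => x i = false ∧ σ i = true)).card := by
    rw [hd]
    have huni : univ.filter (fun v => x v ≠ σ v)
        = univ.filter (fun i => x i = true ∧ σ i = false)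
          ∪ univ.filter (fun i => x i = false ∧ σ i = true) := by
      ext i
      simp only [mem_filter, mem_univ, true_and, mem_union]
      cases hxi : x i <;> cases hsi : σ i <;> simp
    rw [huni, Finset.card_union_of_disjoint]
    rw [Finset.disjoint_left]
    intro i hi1 hi2
    rw [mem_filter] at hi1 hi2
    rw [hi1.2.1] at hi2
    exact absurd hi2.2.1 (by simp)
  have hx' : 2 * (univ.filter (fun i => x i = true)).card = n := hx
  have hσ' : 2 * (univ.filter (fun i => σ i = true)).card = n := hσ
  -- abbreviations for the four fiber cards
  have heven : Even d := by
    refine ⟨(univ.filter (fun i => x i = true ∧ σ i = false)).card, ?_⟩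
    omega
  have hhalf : (n - d) / 2 + d / 2 = n / 2 := by omega
  have H1 := count_one_side k (by omega) x σ ((n - d) / 2) (d / 2)
    (by omega) (by omega) (by omega) (by omega) (by omega) (by omega)
  have H2 := count_one_side k (by omega) σ x ((n - d) / 2) (d / 2)
    (by omega) (by omega)
    (by rw [hcomm]; omega) (by rw [hcomm]; omega) (by rw [hcomm]; omega) (by rw [hcomm]; omega)
  rw [hhalf] at H1 H2
  exact ⟨heven, H1, H2⟩
end

section
/- Let n be even, k ≥ 2 an integer, σ ∈ {±1}^n a balanced vector, and e a k-subset of [n] with r = #{v ∈ e : σ_v = −1} (so that 1_eᵀσ_e = k − 2r). Then σᵀ Y_e σ = 4 k r (k−r) − (16/n) r² (k−r)². In particular σᵀ Y_e σ = 0 whenever σ is constant on e. -/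
open Finset Filter Matrix

open scoped Classical

/-- `σ_e = diag(σ) 1_e`: the signed indicator vector of the edge `e`. -/
noncomputable def sigE {n : ℕ} (σ : Fin n → Bool) (e : Finset (Fin n)) : Fin n → ℝ :=
  fun i => if i ∈ e then sgn σ i else 0

/-- The matrix `(1_eᵀ σ_e) · diag(σ_e) - σ_e σ_eᵀ`. -/
noncomputable def Amat {n : ℕ} (σ : Fin n → Bool) (e : Finset (Fin n)) :
    Matrix (Fin n) (Fin n) ℝ :=
  (∑ i ∈ e, sgn σ i) • Matrix.diagonal (sigE σ e) -
    Matrix.of fun i j => sigE σ e i * sigE σ e j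

/-- For balanced `σ` and a `k`-subset `e` with
`r = #{v ∈ e : σ_v = -1}`, one has `σᵀ Y_e σ = 4kr(k-r) - (16/n) r²(k-r)²`;
in particular `σᵀ Y_e σ = 0` whenever `σ` is constant on `e`. -/
theorem sigma_Ye_sigma (n k : ℕ) (hn : Even n) (hn0 : 0 < n) (hk : 2 ≤ k)
    (σ : Fin n → Bool) (hσ : balanced σ) (e : Finset (Fin n)) (he : e.card = k) :
    sgn σ ⬝ᵥ ((Amat σ e * PiM σ * Amat σ e).mulVec (sgn σ))
        = 4 * (k : ℝ) * ((e.filter (fun v => σ v = false)).card : ℝ) *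
            ((k : ℝ) - ((e.filter (fun v => σ v = false)).card : ℝ))
          - (16 / (n : ℝ)) * ((e.filter (fun v => σ v = false)).card : ℝ) ^ 2 *
            ((k : ℝ) - ((e.filter (fun v => σ v = false)).card : ℝ)) ^ 2 ∧
    (inCluster σ e → sgn σ ⬝ᵥ ((Amat σ e * PiM σ * Amat σ e).mulVec (sgn σ)) = 0) := by
  set r : ℕ := (e.filter (fun v => σ v = false)).card with hrdef
  set t : ℕ := (e.filter (fun v => ¬ σ v = false)).card with htdef
  have hrt : r + t = k := by
    rw [hrdef, htdef, Finset.card_filter_add_card_filter_not, he]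
  have hsgn_sq : ∀ i, sgn σ i * sgn σ i = 1 := by
    intro i; unfold sgn; split <;> norm_num
  set c : ℝ := ∑ i ∈ e, sgn σ i with hc
  have hck : c = (t : ℝ) - (r : ℝ) := by
    rw [hc, ← Finset.sum_filter_add_sum_filter_not e (fun v => σ v = false)]
    have h1 : ∑ i ∈ e.filter (fun v => σ v = false), sgn σ i = -(r : ℝ) := by
      have hterm : ∀ i ∈ e.filter (fun v => σ v = false), sgn σ i = (-1 : ℝ) := by
        intro i hi; simp only [Finset.mem_filter] at hi; simp [sgn, hi.2]
      rw [Finset.sum_congr rfl hterm, Finset.sum_const, hrdef]; simp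
    have h2 : ∑ i ∈ e.filter (fun v => ¬ σ v = false), sgn σ i = (t : ℝ) := by
      have hterm : ∀ i ∈ e.filter (fun v => ¬ σ v = false), sgn σ i = (1 : ℝ) := by
        intro i hi; simp only [Finset.mem_filter] at hi
        have : σ i = true := by simpa using hi.2
        simp [sgn, this]
      rw [Finset.sum_congr rfl hterm, Finset.sum_const, htdef]; simp
    rw [h1, h2]; ring
  -- basic sums
  have hSum_ind : ∑ i, (if i ∈ e then (1 : ℝ) else 0) = (k : ℝ) := by
    rw [Finset.sum_ite_mem, Finset.univ_inter, Finset.sum_const, he]; simp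
  have hSum_sigE : ∑ i, sigE σ e i = c := by
    unfold sigE; rw [Finset.sum_ite_mem, Finset.univ_inter, hc]
  have hSum_sgn_sigE : ∑ i, sgn σ i * sigE σ e i = (k : ℝ) := by
    unfold sigE
    simp only [mul_ite, mul_zero]
    rw [Finset.sum_ite_mem, Finset.univ_inter]
    rw [Finset.sum_congr rfl (fun i _ => hsgn_sq i), Finset.sum_const, he]; simp
  have hSum_sigE_sq : ∀ f : Fin n → ℝ,
      ∑ i, sigE σ e i * f i = ∑ i ∈ e, sgn σ i * f i := by
    intro f; unfold sigE
    simp only [ite_mul, zero_mul]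
    rw [Finset.sum_ite_mem, Finset.univ_inter]
  -- v = A σ
  set v : Fin n → ℝ := fun i => c * (if i ∈ e then 1 else 0) - (k : ℝ) * sigE σ e i with hv
  have hAv : (Amat σ e).mulVec (sgn σ) = v := by
    funext i
    simp only [Matrix.mulVec, dotProduct, Amat, Matrix.sub_apply,
      Matrix.smul_apply, Matrix.diagonal_apply, Matrix.of_apply, smul_eq_mul,
      sub_mul, Finset.sum_sub_distrib, mul_ite, ite_mul, mul_zero, zero_mul]
    rw [Finset.sum_ite_eq Finset.univ i (fun j => (∑ x ∈ e, sgn σ x) * sigE σ e i * sgn σ j)]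
    simp only [Finset.mem_univ, if_true]
    have h2 : ∑ j, sigE σ e i * sigE σ e j * sgn σ j
        = sigE σ e i * (k : ℝ) := by
      rw [← hSum_sgn_sigE, Finset.mul_sum]
      exact Finset.sum_congr rfl (fun j _ => by ring)
    rw [h2, hv]
    have h3 : sigE σ e i * sgn σ i = (if i ∈ e then (1 : ℝ) else 0) := by
      unfold sigE; split <;> simp [hsgn_sq i]
    rw [← hc]
    calc c * sigE σ e i * sgn σ i - sigE σ e i * (k:ℝ)
        = c * (sigE σ e i * sgn σ i) - (k:ℝ) * sigE σ e i := by ring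
      _ = c * (if i ∈ e then 1 else 0) - (k:ℝ) * sigE σ e i := by rw [h3]
  have hAsymm : (Amat σ e)ᵀ = Amat σ e := by
    ext i j
    simp only [Amat, Matrix.transpose_apply, Matrix.sub_apply, Matrix.smul_apply,
      Matrix.diagonal_apply, Matrix.of_apply, smul_eq_mul]
    by_cases h : i = j
    · subst h; ring
    · rw [if_neg h, if_neg (Ne.symm h)]; ring
  have hvA : (Amat σ e).vecMul (sgn σ) = v := by
    rw [← Matrix.mulVec_transpose, hAsymm, hAv]
  -- sums involving v
  have hSumv : ∑ i, v i = 0 := by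
    simp only [hv, Finset.sum_sub_distrib, ← Finset.mul_sum, hSum_ind, hSum_sigE]
    ring
  have hsv : ∑ i, sgn σ i * v i = c ^ 2 - (k : ℝ) ^ 2 := by
    simp only [hv, mul_sub, Finset.sum_sub_distrib]
    have h1 : ∑ i, sgn σ i * (c * (if i ∈ e then 1 else 0)) = c * c := by
      have hterm : ∀ i, sgn σ i * (c * (if i ∈ e then (1:ℝ) else 0))
          = (if i ∈ e then c * sgn σ i else 0) := by
        intro i; split <;> ring
      rw [Finset.sum_congr rfl (fun i _ => hterm i), Finset.sum_ite_mem,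
        Finset.univ_inter, ← Finset.mul_sum, ← hc]
    have h2 : ∑ i, sgn σ i * ((k : ℝ) * sigE σ e i) = (k : ℝ) * (k : ℝ) := by
      rw [← hSum_sgn_sigE, Finset.mul_sum]
      · exact Finset.sum_congr rfl (fun i _ => by ring)
    rw [h1, h2]; ring
  have hvv : ∑ i, v i * v i = (k : ℝ) * ((k : ℝ) ^ 2 - c ^ 2) := by
    have expand : ∀ i, v i * v i =
        c ^ 2 * ((if i ∈ e then (1:ℝ) else 0) * (if i ∈ e then (1:ℝ) else 0))
        - 2 * c * (k : ℝ) * ((if i ∈ e then (1:ℝ) else 0) * sigE σ e i)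
        + (k : ℝ) ^ 2 * (sigE σ e i * sigE σ e i) := by
      intro i; rw [hv]; ring
    rw [Finset.sum_congr rfl (fun i _ => expand i)]
    have e1 : ∑ i, (if i ∈ e then (1:ℝ) else 0) * (if i ∈ e then (1:ℝ) else 0) = (k : ℝ) := by
      rw [← hSum_ind]; exact Finset.sum_congr rfl (fun i _ => by split <;> norm_num)
    have e2 : ∑ i, (if i ∈ e then (1:ℝ) else 0) * sigE σ e i = c := by
      rw [← hSum_sigE]
      refine Finset.sum_congr rfl (fun i _ => ?_)
      unfold sigE; split <;> simp
    have e3 : ∑ i, sigE σ e i * sigE σ e i = (k : ℝ) := by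
      rw [hSum_sigE_sq (sigE σ e)]
      unfold sigE
      rw [Finset.sum_congr rfl (fun i hi => by rw [if_pos hi, hsgn_sq i])]
      rw [Finset.sum_const, he]; simp
    simp only [Finset.sum_add_distrib, Finset.sum_sub_distrib, ← Finset.mul_sum, e1, e2, e3]
    ring
  -- Π v
  set w : Fin n → ℝ := fun i => v i - (n : ℝ)⁻¹ * (c ^ 2 - (k : ℝ) ^ 2) * sgn σ i with hw
  have hPiv : (PiM σ).mulVec v = w := by
    funext i
    simp only [PiM, Matrix.sub_mulVec, Matrix.smul_mulVec, Matrix.one_mulVec,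
      Pi.sub_apply, Pi.smul_apply, smul_eq_mul]
    have h1 : (Matrix.of fun _ _ => (1:ℝ)).mulVec v i = ∑ j, v j := by
      simp [Matrix.mulVec, dotProduct]
    have h2 : (outer σ).mulVec v i = sgn σ i * (c ^ 2 - (k : ℝ) ^ 2) := by
      simp only [outer, Matrix.mulVec, dotProduct, Matrix.of_apply]
      rw [← hsv, Finset.mul_sum]
      exact Finset.sum_congr rfl (fun j _ => by ring)
    rw [h1, h2, hSumv, hw]; ring
  -- main computation
  have key : sgn σ ⬝ᵥ ((Amat σ e * PiM σ * Amat σ e).mulVec (sgn σ))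
      = (k : ℝ) * ((k : ℝ) ^ 2 - c ^ 2) - (n : ℝ)⁻¹ * (c ^ 2 - (k : ℝ) ^ 2) ^ 2 := by
    rw [← Matrix.mulVec_mulVec, ← Matrix.mulVec_mulVec, hAv, hPiv,
      Matrix.dotProduct_mulVec, hvA]
    simp only [dotProduct, hw]
    have : ∀ i, v i * (v i - (n : ℝ)⁻¹ * (c ^ 2 - (k : ℝ) ^ 2) * sgn σ i)
        = v i * v i - (n : ℝ)⁻¹ * (c ^ 2 - (k : ℝ) ^ 2) * (sgn σ i * v i) := by
      intro i; ring
    rw [Finset.sum_congr rfl (fun i _ => this i)]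
    simp only [Finset.sum_sub_distrib, ← Finset.mul_sum, hvv, hsv]
    ring
  have hkR : (k : ℝ) = (r : ℝ) + (t : ℝ) := by
    rw [← hrt]; push_cast; ring
  have main : sgn σ ⬝ᵥ ((Amat σ e * PiM σ * Amat σ e).mulVec (sgn σ))
      = 4 * (k : ℝ) * (r : ℝ) * ((k : ℝ) - (r : ℝ))
        - (16 / (n : ℝ)) * (r : ℝ) ^ 2 * ((k : ℝ) - (r : ℝ)) ^ 2 := by
    rw [key, hck, hkR]
    field_simp
    ring
  refine ⟨main, fun hcl => ?_⟩
  have hne : e.Nonempty := by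
    rw [← Finset.card_pos, he]; omega
  obtain ⟨i₀, hi₀⟩ := hne
  have hconst : ∀ i ∈ e, σ i = σ i₀ := fun i hi => hcl i hi i₀ hi₀
  rw [main]
  rcases Bool.eq_false_or_eq_true (σ i₀) with h0 | h0
  · have : r = 0 := by
      rw [hrdef, Finset.card_eq_zero]
      apply Finset.filter_eq_empty_iff.mpr
      intro i hi; rw [hconst i hi, h0]; simp
    rw [this]; push_cast; ring
  · have : r = k := by
      rw [hrdef, ← he]
      congr 1
      apply Finset.filter_true_of_mem
      intro i hi; rw [hconst i hi, h0]
    rw [this]; ring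
end
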